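/- arXiv:2204.09972 — 16 statements merged into one kernel-verified Lean document; each statement's English description precedes it below -/
import Mathlib

section
/- Let E be a finite nonempty type, let P be an irreducible stochastic matrix on E, and let π be an invariant probability vector of P. Then the matrix I − P + e π^T is invertible. -/
open Matrix BigOperators

theorem stmt0 {E : Type*} [Fintype E] [Nonempty E] [DecidableEq E]
    (P : Matrix E E ℝ)
    (hP0 : ∀ i j, 0 ≤ P i j) (hP1 : ∀ i, ∑ j, P i j = 1)
    (hirr : ∀ i j, ∃ n, 1 ≤ n ∧ 0 < (P ^ n) i j)
    (π : E → ℝ) (hπ0 : ∀ i, 0 ≤ π i) (hπ1 : ∑ i, π i = 1)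
    (hπP : π ᵥ* P = π) :
    IsUnit (1 - P + Matrix.vecMulVec (fun _ => (1 : ℝ)) π) := by
  have hpow0 : ∀ n i j, 0 ≤ (P ^ n) i j := by
    intro n
    induction n with
    | zero => intro i j; simp [Matrix.one_apply]; split <;> norm_num
    | succ n ih =>
      intro i j
      rw [pow_succ, Matrix.mul_apply]
      exact Finset.sum_nonneg fun k _ => mul_nonneg (ih i k) (hP0 k j)
  have hpow1 : ∀ n i, ∑ j, (P ^ n) i j = 1 := by
    intro n
    induction n with
    | zero => intro i; simp [Matrix.one_apply]
    | succ n ih =>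
      intro i
      simp only [pow_succ, Matrix.mul_apply]
      rw [Finset.sum_comm]
      calc ∑ k, ∑ j, (P ^ n) i k * P k j
          = ∑ k, (P ^ n) i k * ∑ j, P k j := by
            simp [Finset.mul_sum]
        _ = 1 := by simp [hP1, ih i]
  rw [Matrix.isUnit_iff_isUnit_det, isUnit_iff_ne_zero]
  intro hdet
  obtain ⟨v, hv0, hv⟩ := (Matrix.exists_mulVec_eq_zero_iff).mpr hdet
  rw [Matrix.add_mulVec, Matrix.sub_mulVec, Matrix.one_mulVec] at hv
  have hvv : vecMulVec (fun _ : E => (1:ℝ)) π *ᵥ v = fun _ : E => π ⬝ᵥ v := by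
    ext i
    simp [Matrix.mulVec, Matrix.vecMulVec_apply, dotProduct, mul_assoc]
  rw [hvv] at hv
  -- dot with π
  have hc : π ⬝ᵥ v = 0 := by
    have := congrArg (fun x => π ⬝ᵥ x) hv
    simp only [dotProduct_add, dotProduct_sub,
      dotProduct_zero, Matrix.dotProduct_mulVec, hπP] at this
    have h1 : (π ⬝ᵥ fun _ => π ⬝ᵥ v) = π ⬝ᵥ v := by
      simp [dotProduct, ← Finset.sum_mul, hπ1]
    rw [h1] at this
    linarith
  have hfix : P *ᵥ v = v := by
    funext i
    have := congrFun hv i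
    have hc2 : (fun _ : E => π ⬝ᵥ v) i = 0 := by simp [hc]
    simp only [Pi.add_apply, Pi.sub_apply, Pi.zero_apply, hc2] at this
    linarith
  have hfixn : ∀ n, P ^ n *ᵥ v = v := by
    intro n
    induction n with
    | zero => simp
    | succ n ih => rw [pow_succ, ← Matrix.mulVec_mulVec, hfix, ih]
  obtain ⟨i0, hi0⟩ := Finite.exists_max v
  have hconst : ∀ j, v j = v i0 := by
    intro j
    obtain ⟨n, hn1, hpos⟩ := hirr i0 j
    have h1 : ∑ k, (P ^ n) i0 k * v k = v i0 := by
      have := congrFun (hfixn n) i0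
      simpa [Matrix.mulVec, dotProduct] using this
    have h2 : ∑ k, (P ^ n) i0 k * (v i0 - v k) = 0 := by
      have : ∑ k, (P ^ n) i0 k * (v i0 - v k)
          = (∑ k, (P ^ n) i0 k) * v i0 - ∑ k, (P ^ n) i0 k * v k := by
        rw [Finset.sum_mul, ← Finset.sum_sub_distrib]
        congr 1; ext k; ring
      rw [this, hpow1 n i0, h1]; ring
    have h3 := (Finset.sum_eq_zero_iff_of_nonneg
      (fun k _ => mul_nonneg (hpow0 n i0 k) (by linarith [hi0 k]))).mp h2 j
      (Finset.mem_univ j)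
    have := mul_eq_zero.mp h3
    rcases this with h | h
    · exact absurd h (ne_of_gt hpos)
    · linarith
  have hvi0 : v i0 = 0 := by
    have : π ⬝ᵥ v = v i0 := by
      simp only [dotProduct]
      calc ∑ k, π k * v k = ∑ k, π k * v i0 := by
            apply Finset.sum_congr rfl; intro k _; rw [hconst k]
        _ = v i0 := by rw [← Finset.sum_mul, hπ1, one_mul]
    rw [hc] at this; exact this.symm
  apply hv0
  funext j
  rw [hconst j, hvi0]; rfl
end

section
/- Let E be a finite nonempty type, let P be an irreducible stochastic matrix on E, and let π be an invariant probability vector of P. Then the matrix G := (I − P + e π^T)^{-1} − e π^T satisfies the group-inverse identities (I − P) G (I − P) = I − P, G (I − P) G = G, and G (I − P) = (I − P) G; moreover (I − P) G = I − e π^T, so G is a solution of Poisson's equation in matrix form. -/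
open Matrix BigOperators

theorem stmt1 {E : Type*} [Fintype E] [Nonempty E] [DecidableEq E]
    (P : Matrix E E ℝ)
    (hP0 : ∀ i j, 0 ≤ P i j) (hP1 : ∀ i, ∑ j, P i j = 1)
    (hirr : ∀ i j, ∃ n, 1 ≤ n ∧ 0 < (P ^ n) i j)
    (π : E → ℝ) (hπ0 : ∀ i, 0 ≤ π i) (hπ1 : ∑ i, π i = 1)
    (hπP : π ᵥ* P = π)
    (G : Matrix E E ℝ)
    (hG : G = (1 - P + Matrix.vecMulVec (fun _ => (1 : ℝ)) π)⁻¹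
            - Matrix.vecMulVec (fun _ => (1 : ℝ)) π) :
    (1 - P) * G * (1 - P) = 1 - P ∧
    G * (1 - P) * G = G ∧
    G * (1 - P) = (1 - P) * G ∧
    (1 - P) * G = 1 - Matrix.vecMulVec (fun _ => (1 : ℝ)) π := by
  classical
  set Q : Matrix E E ℝ := Matrix.vecMulVec (fun _ => (1 : ℝ)) π with hQdef
  set A : Matrix E E ℝ := 1 - P + Q with hAdef
  -- entries of powers are nonnegative
  have hPn0 : ∀ n, ∀ i j, 0 ≤ (P ^ n) i j := by
    intro n
    induction n with
    | zero =>
      intro i j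
      simp only [pow_zero, Matrix.one_apply]
      split <;> norm_num
    | succ n ih =>
      intro i j
      rw [pow_succ, Matrix.mul_apply]
      exact Finset.sum_nonneg fun k _ => mul_nonneg (ih i k) (hP0 k j)
  -- rows of powers sum to 1
  have hPn1 : ∀ n i, ∑ j, (P ^ n) i j = 1 := by
    intro n
    induction n with
    | zero => intro i; simp [Matrix.one_apply]
    | succ n ih =>
      intro i
      rw [pow_succ]
      simp only [Matrix.mul_apply]
      rw [Finset.sum_comm]
      calc ∑ k, ∑ j, (P ^ n) i k * P k j
          = ∑ k, (P ^ n) i k * ∑ j, P k j := by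
            simp [Finset.mul_sum]
        _ = 1 := by simp [hP1, ih i]
  -- harmonic functions are constant
  have hharm : ∀ x : E → ℝ, P *ᵥ x = x → ∀ j k, x j = x k := by
    intro x hx
    have hxn : ∀ n, (P ^ n) *ᵥ x = x := by
      intro n
      induction n with
      | zero => simp
      | succ n ih => rw [pow_succ, ← Matrix.mulVec_mulVec, hx, ih]
    obtain ⟨i0, -, hi0⟩ := Finset.exists_max_image Finset.univ x ⟨Classical.arbitrary E, Finset.mem_univ _⟩
    have hmax : ∀ j, x j = x i0 := by
      intro j
      obtain ⟨n, -, hpos⟩ := hirr i0 j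
      have hrow : ∑ k, (P ^ n) i0 k * (x i0 - x k) = 0 := by
        have h1 : ∑ k, (P ^ n) i0 k * x k = x i0 := by
          have := congrFun (hxn n) i0
          simpa [Matrix.mulVec, dotProduct] using this
        have h2 : ∑ k, (P ^ n) i0 k * x i0 = x i0 := by
          rw [← Finset.sum_mul, hPn1 n i0, one_mul]
        simp [mul_sub, Finset.sum_sub_distrib, h1, h2]
      have hzero : ∀ k ∈ Finset.univ, (P ^ n) i0 k * (x i0 - x k) = 0 :=
        (Finset.sum_eq_zero_iff_of_nonneg (fun k _ =>
          mul_nonneg (hPn0 n i0 k) (sub_nonneg.mpr (hi0 k (Finset.mem_univ k))))).mp hrow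
      have := hzero j (Finset.mem_univ j)
      rcases mul_eq_zero.mp this with h | h
      · exact absurd h (ne_of_gt hpos)
      · linarith [sub_eq_zero.mp h]
    intro j k; rw [hmax j, hmax k]
  -- injectivity of A
  have hker : ∀ x : E → ℝ, A *ᵥ x = 0 → x = 0 := by
    intro x hx
    have hπA : π ᵥ* A = π := by
      have hπQ : π ᵥ* Q = π := by
        ext j
        simp [Matrix.vecMul, dotProduct, hQdef, Matrix.vecMulVec_apply,
          ← Finset.sum_mul, hπ1]
      rw [hAdef]
      simp [Matrix.vecMul_add, Matrix.vecMul_sub, hπP, hπQ]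
    have hdot : π ⬝ᵥ x = 0 := by
      have : π ᵥ* A ⬝ᵥ x = π ⬝ᵥ (A *ᵥ x) := by
        rw [Matrix.dotProduct_mulVec]
      rw [hπA, hx] at this
      simpa using this
    have hQx : Q *ᵥ x = 0 := by
      ext i
      simpa [Matrix.mulVec, dotProduct, hQdef, Matrix.vecMulVec_apply]
        using hdot
    have hPx : P *ᵥ x = x := by
      have := hx
      rw [hAdef, Matrix.add_mulVec, Matrix.sub_mulVec, hQx, Matrix.one_mulVec] at this
      have h2 : x - P *ᵥ x = 0 := by simpa using this
      have := sub_eq_zero.mp h2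
      exact this.symm
    have hconst := hharm x hPx
    -- x is constant; and π ⬝ᵥ x = 0 forces x = 0
    funext j
    have hsum : π ⬝ᵥ x = x j := by
      calc π ⬝ᵥ x = ∑ i, π i * x i := rfl
        _ = ∑ i, π i * x j := by
            apply Finset.sum_congr rfl
            intro i _
            rw [hconst i j]
        _ = x j := by rw [← Finset.sum_mul, hπ1, one_mul]
    have : x j = 0 := by rw [← hsum, hdot]
    simpa using this
  have hdet : A.det ≠ 0 := by
    intro h
    obtain ⟨v, hv, hav⟩ := (Matrix.exists_mulVec_eq_zero_iff).mpr h
    exact hv (hker v hav)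
  have hUnit : IsUnit A.det := isUnit_iff_ne_zero.mpr hdet
  -- matrix identities with Q
  have hPQ : P * Q = Q := by
    ext i j
    simp [Matrix.mul_apply, hQdef, Matrix.vecMulVec_apply, ← Finset.sum_mul, hP1]
  have hQP : Q * P = Q := by
    ext i j
    have := congrFun hπP j
    simp only [Matrix.vecMul, dotProduct] at this
    simp [Matrix.mul_apply, hQdef, Matrix.vecMulVec_apply, this]
  have hQQ : Q * Q = Q := by
    ext i j
    simp [Matrix.mul_apply, hQdef, Matrix.vecMulVec_apply, ← Finset.sum_mul, hπ1]
  have hAQ : A * Q = Q := by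
    rw [hAdef, add_mul, sub_mul, one_mul, hPQ, hQQ]
    abel
  have hQA : Q * A = Q := by
    rw [hAdef, mul_add, mul_sub, mul_one, hQP, hQQ]
    abel
  have hAiA : A * A⁻¹ = 1 := Matrix.mul_nonsing_inv A hUnit
  have hiAA : A⁻¹ * A = 1 := Matrix.nonsing_inv_mul A hUnit
  have hiAQ : A⁻¹ * Q = Q := by
    calc A⁻¹ * Q = A⁻¹ * (A * Q) := by rw [hAQ]
      _ = (A⁻¹ * A) * Q := by rw [mul_assoc]
      _ = Q := by rw [hiAA, one_mul]
  have hQiA : Q * A⁻¹ = Q := by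
    calc Q * A⁻¹ = (Q * A) * A⁻¹ := by rw [hQA]
      _ = Q * (A * A⁻¹) := by rw [mul_assoc]
      _ = Q := by rw [hAiA, mul_one]
  have h1P : 1 - P = A - Q := by rw [hAdef]; abel
  have hGdef : G = A⁻¹ - Q := by rw [hG, hAdef, hQdef]
  have hleft : (1 - P) * G = 1 - Q := by
    rw [h1P, hGdef, sub_mul, mul_sub, mul_sub, hAiA, hAQ, hQiA, hQQ]
    abel
  have hright : G * (1 - P) = 1 - Q := by
    rw [h1P, hGdef, sub_mul, mul_sub, mul_sub, hiAA, hiAQ, hQA, hQQ]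
    abel
  have hQG : Q * G = 0 := by
    rw [hGdef, mul_sub, hQiA, hQQ, sub_self]
  have hGQ : G * Q = 0 := by
    rw [hGdef, sub_mul, hiAQ, hQQ, sub_self]
  refine ⟨?_, ?_, ?_, ?_⟩
  · rw [hleft, sub_mul, one_mul, h1P, mul_sub, hQA, hQQ]
    abel
  · rw [hright, sub_mul, one_mul, hQG]
    abel
  · rw [hleft, hright]
  · rw [hleft]
end

section
/- Let E be a finite nonempty type and let P be an irreducible stochastic matrix on E. If a column vector h : E → ℝ satisfies P h = h, then h is constant, i.e. there exists c ∈ ℝ with h(i) = c for all i ∈ E. -/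
open Matrix BigOperators

theorem stmt2 {E : Type*} [Fintype E] [Nonempty E] [DecidableEq E]
    (P : Matrix E E ℝ)
    (hP0 : ∀ i j, 0 ≤ P i j) (hP1 : ∀ i, ∑ j, P i j = 1)
    (hirr : ∀ i j, ∃ n, 1 ≤ n ∧ 0 < (P ^ n) i j)
    (h : E → ℝ) (hh : P *ᵥ h = h) :
    ∃ c : ℝ, ∀ i, h i = c := by
  -- P^n has nonneg entries and row sums 1, and fixes h
  have pow0 : ∀ n i j, 0 ≤ (P ^ n) i j := by
    intro n
    induction n with
    | zero => intro i j; by_cases hij : i = j <;> simp [Matrix.one_apply, hij]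
    | succ n ih =>
      intro i j
      rw [pow_succ, Matrix.mul_apply]
      exact Finset.sum_nonneg fun k _ => mul_nonneg (ih i k) (hP0 k j)
  have powfix : ∀ n, (P ^ n) *ᵥ h = h := by
    intro n
    induction n with
    | zero => simp
    | succ n ih => rw [pow_succ, ← Matrix.mulVec_mulVec, hh, ih]
  have pow1 : ∀ n i, ∑ j, (P ^ n) i j = 1 := by
    intro n
    induction n with
    | zero => intro i; simp [Matrix.one_apply]
    | succ n ih =>
      intro i
      rw [pow_succ]
      simp only [Matrix.mul_apply]
      rw [Finset.sum_comm]
      calc ∑ k, ∑ j, (P ^ n) i k * P k j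
          = ∑ k, (P ^ n) i k * ∑ j, P k j := by
            simp [Finset.mul_sum]
        _ = 1 := by simp [hP1, ih i]
  obtain ⟨i0, hi0⟩ := Finite.exists_max h
  refine ⟨h i0, fun j => ?_⟩
  obtain ⟨n, -, hn⟩ := hirr i0 j
  have hfix : ∑ k, (P ^ n) i0 k * h k = h i0 := by
    have := congrFun (powfix n) i0
    simpa [Matrix.mulVec, dotProduct] using this
  have hsum0 : ∑ k, (P ^ n) i0 k * (h i0 - h k) = 0 := by
    simp only [mul_sub]
    rw [Finset.sum_sub_distrib, hfix, ← Finset.sum_mul, pow1 n i0, one_mul, sub_self]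
  have hterm : ∀ k ∈ Finset.univ, 0 ≤ (P ^ n) i0 k * (h i0 - h k) :=
    fun k _ => mul_nonneg (pow0 n i0 k) (sub_nonneg.2 (hi0 k))
  have := (Finset.sum_eq_zero_iff_of_nonneg hterm).1 hsum0 j (Finset.mem_univ j)
  have h2 : h i0 - h j = 0 := by
    rcases mul_eq_zero.1 this with h' | h'
    · exact absurd h' (ne_of_gt hn)
    · exact h'
  linarith
end

section
/- Let E be a finite nonempty type, let P be an irreducible stochastic matrix on E, and let π be an invariant probability vector of P. If X₁ and X₂ are two E×E real matrices both satisfying (I − P) X = I − e π^T, then there exists a vector β : E → ℝ such that X₁(i,j) = X₂(i,j) + β(j) for all i, j ∈ E. -/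
open Matrix BigOperators

lemma pow_stoch {E : Type*} [Fintype E] [DecidableEq E]
    (P : Matrix E E ℝ) (hP0 : ∀ i j, 0 ≤ P i j) (hP1 : ∀ i, ∑ j, P i j = 1) (n : ℕ) :
    (∀ i j, 0 ≤ (P ^ n) i j) ∧ (∀ i, ∑ j, (P ^ n) i j = 1) := by
  induction n with
  | zero =>
    constructor
    · intro i j; simp [Matrix.one_apply]; positivity
    · intro i; simp [Matrix.one_apply]
  | succ n ih =>
    rw [pow_succ]
    constructor
    · intro i j
      apply Finset.sum_nonneg
      intro k _
      exact mul_nonneg (ih.1 i k) (hP0 k j)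
    · intro i
      simp only [Matrix.mul_apply]
      rw [Finset.sum_comm]
      calc ∑ k, ∑ j, (P ^ n) i k * P k j
          = ∑ k, (P ^ n) i k * ∑ j, P k j := by
            simp [Finset.mul_sum]
        _ = 1 := by simp [hP1, ih.2 i]

lemma harmonic_const {E : Type*} [Fintype E] [Nonempty E] [DecidableEq E]
    (P : Matrix E E ℝ)
    (hP0 : ∀ i j, 0 ≤ P i j) (hP1 : ∀ i, ∑ j, P i j = 1)
    (hirr : ∀ i j, ∃ n, 1 ≤ n ∧ 0 < (P ^ n) i j)
    (y : E → ℝ) (hy : P *ᵥ y = y) (i j : E) : y i = y j := by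
  have hyn : ∀ n, (P ^ n) *ᵥ y = y := by
    intro n
    induction n with
    | zero => simp
    | succ n ih => rw [pow_succ', ← Matrix.mulVec_mulVec, ih, hy]
  obtain ⟨i₀, -, hmax⟩ := Finset.exists_max_image Finset.univ y ⟨i, Finset.mem_univ i⟩
  have key : ∀ k, y k = y i₀ := by
    intro k
    obtain ⟨n, -, hpos⟩ := hirr i₀ k
    have hrow := (pow_stoch P hP0 hP1 n).2 i₀
    have hnn := (pow_stoch P hP0 hP1 n).1
    have hv : ∑ l, (P ^ n) i₀ l * y l = y i₀ := by
      have := congrFun (hyn n) i₀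
      simpa [Matrix.mulVec, dotProduct] using this
    have hsum0 : ∑ l, (P ^ n) i₀ l * (y i₀ - y l) = 0 := by
      have : ∑ l, (P ^ n) i₀ l * (y i₀ - y l)
          = (∑ l, (P ^ n) i₀ l) * y i₀ - ∑ l, (P ^ n) i₀ l * y l := by
        rw [Finset.sum_mul, ← Finset.sum_sub_distrib]
        congr 1; ext l; ring
      rw [this, hrow, hv]; ring
    have hterm : (P ^ n) i₀ k * (y i₀ - y k) = 0 := by
      have := (Finset.sum_eq_zero_iff_of_nonneg ?_).mp hsum0 k (Finset.mem_univ k)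
      · exact this
      · intro l _
        exact mul_nonneg (hnn i₀ l) (sub_nonneg.mpr (hmax l (Finset.mem_univ l)))
      
    have : y i₀ - y k = 0 := by
      rcases mul_eq_zero.mp hterm with h | h
      · exact absurd h (ne_of_gt hpos)
      · exact h
    linarith
  rw [key i, key j]

theorem stmt3 {E : Type*} [Fintype E] [Nonempty E] [DecidableEq E]
    (P : Matrix E E ℝ)
    (hP0 : ∀ i j, 0 ≤ P i j) (hP1 : ∀ i, ∑ j, P i j = 1)
    (hirr : ∀ i j, ∃ n, 1 ≤ n ∧ 0 < (P ^ n) i j)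
    (π : E → ℝ) (hπ0 : ∀ i, 0 ≤ π i) (hπ1 : ∑ i, π i = 1)
    (hπP : π ᵥ* P = π)
    (X₁ X₂ : Matrix E E ℝ)
    (hX₁ : (1 - P) * X₁ = 1 - Matrix.vecMulVec (fun _ => (1 : ℝ)) π)
    (hX₂ : (1 - P) * X₂ = 1 - Matrix.vecMulVec (fun _ => (1 : ℝ)) π) :
    ∃ β : E → ℝ, ∀ i j, X₁ i j = X₂ i j + β j := by
  set Y := X₁ - X₂ with hY
  have hPY : P * Y = Y := by
    have h : (1 - P) * Y = 0 := by
      rw [hY, Matrix.mul_sub, hX₁, hX₂, sub_self]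
    have := h
    rw [Matrix.sub_mul, Matrix.one_mul, sub_eq_zero] at this
    exact this.symm
  obtain ⟨i₀⟩ := ‹Nonempty E›
  refine ⟨fun j => Y i₀ j, fun i j => ?_⟩
  have hharm : P *ᵥ (fun k => Y k j) = (fun k => Y k j) := by
    funext k
    have := congrFun (congrFun hPY k) j
    simpa [Matrix.mulVec, dotProduct, Matrix.mul_apply] using this
  have := harmonic_const P hP0 hP1 hirr (fun k => Y k j) hharm i i₀
  simp only [hY, Matrix.sub_apply] at this ⊢
  linarith
end

section
/- Let E be a countable type, let P be an irreducible transition matrix on E, and let π be an invariant probability vector of P. If h : E → ℝ is harmonic, i.e. for each i ∈ E the family (P(i,k)·h(k))_{k∈E} has sum h(i), and the family (π(i)·|h(i)|)_{i∈E} is summable, then h is constant: h(i) = h(j) for all i, j ∈ E. -/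
open BigOperators

theorem stmt4 {E : Type*} [Countable E]
    (P : E → E → ℝ) (hP0 : ∀ i j, 0 ≤ P i j) (hP1 : ∀ i, HasSum (P i) 1)
    (hirr : ∀ i j, ∃ n, 1 ≤ n ∧ ∃ x : ℕ → E, x 0 = i ∧ x n = j ∧
      ∀ k < n, 0 < P (x k) (x (k + 1)))
    (π : E → ℝ) (hπ0 : ∀ i, 0 ≤ π i) (hπ1 : ∑' i, π i = 1)
    (hπP : ∀ j, HasSum (fun i => π i * P i j) (π j))
    (h : E → ℝ)
    (hharm : ∀ i, HasSum (fun k => P i k * h k) (h i))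
    (hsum : Summable fun i => π i * |h i|) :
    ∀ i j, h i = h j := by
  -- π is summable
  have hπsum : Summable π := by
    by_contra hc
    rw [tsum_eq_zero_of_not_summable hc] at hπ1
    norm_num at hπ1
  -- π is positive everywhere
  have hstep : ∀ a b, 0 < π a → 0 < P a b → 0 < π b := by
    intro a b ha hab
    have h1 : π a * P a b ≤ π b := by
      refine Summable.le_tsum (hπP b).summable a (fun c _ => mul_nonneg (hπ0 c) (hP0 c b)) |>.trans_eq ?_
      exact (hπP b).tsum_eq
    nlinarith
  have hπpos : ∀ k, 0 < π k := by
    have hex : ∃ k0, 0 < π k0 := by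
      by_contra hc
      push_neg at hc
      have : ∀ k, π k = 0 := fun k => le_antisymm (hc k) (hπ0 k)
      rw [tsum_congr this, tsum_zero] at hπ1
      norm_num at hπ1
    obtain ⟨k0, hk0⟩ := hex
    intro k
    obtain ⟨n, -, x, hx0, hxn, hxp⟩ := hirr k0 k
    have key : ∀ m, m ≤ n → 0 < π (x m) := by
      intro m
      induction m with
      | zero => intro _; rw [hx0]; exact hk0
      | succ m ih =>
        intro hm
        exact hstep _ _ (ih (Nat.le_of_succ_le hm)) (hxp m (Nat.lt_of_succ_le hm))
    have := key n le_rfl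
    rwa [hxn] at this
  intro i j
  set f : E → ℝ := fun k => h k - h j with hf
  set g : E → ℝ := fun k => |f k| with hg
  have hfharm : ∀ a, HasSum (fun k => P a k * f k) (f a) := by
    intro a
    have := (hharm a).sub ((hP1 a).mul_right (h j))
    simpa [hf, mul_sub] using this
  have hgsumm : ∀ a, Summable (fun k => P a k * g k) := by
    intro a
    have := (hfharm a).summable.abs
    refine this.congr fun k => ?_
    simp [hg, abs_mul, abs_of_nonneg (hP0 a k)]
  have hsub : ∀ a, g a ≤ ∑' k, P a k * g k := by
    intro a
    have h1 : f a = ∑' k, P a k * f k := (hfharm a).tsum_eq.symm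
    have h2 : ∑' k, ‖P a k * f k‖ = ∑' k, P a k * g k := by
      refine tsum_congr fun k => ?_
      simp [hg, Real.norm_eq_abs, abs_mul, abs_of_nonneg (hP0 a k)]
    calc g a = ‖∑' k, P a k * f k‖ := by rw [hg]; simp only [Real.norm_eq_abs]; rw [← h1]
    _ ≤ ∑' k, ‖P a k * f k‖ := norm_tsum_le_tsum_norm (hfharm a).summable.abs
    _ = ∑' k, P a k * g k := h2
  have hπg : Summable fun k => π k * g k := by
    refine Summable.of_nonneg_of_le (fun k => mul_nonneg (hπ0 k) (abs_nonneg _)) ?_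
      (hsum.add (hπsum.mul_right |h j|))
    intro k
    have h3 : |f k| ≤ |h k| + |h j| := abs_sub _ _
    have := hπ0 k
    simp only [hg]
    nlinarith
  -- double family, indexed as (k, i) ↦ π i * P i k * g k
  set F : E × E → ℝ := fun p => π p.2 * P p.2 p.1 * g p.1 with hF
  have hF0 : 0 ≤ F := fun p =>
    mul_nonneg (mul_nonneg (hπ0 _) (hP0 _ _)) (abs_nonneg _)
  have hcol : ∀ k, (∑' a, π a * P a k * g k) = π k * g k := by
    intro k
    rw [tsum_mul_right, (hπP k).tsum_eq]
  have hFsum : Summable F := by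
    rw [summable_prod_of_nonneg hF0]
    refine ⟨fun k => ((hπP k).summable.mul_right (g k)), ?_⟩
    refine hπg.congr fun k => (hcol k).symm
  set G : E × E → ℝ := fun p => π p.1 * P p.1 p.2 * g p.2 with hG
  have hG0 : 0 ≤ G := fun p =>
    mul_nonneg (mul_nonneg (hπ0 _) (hP0 _ _)) (abs_nonneg _)
  have hGsum : Summable G := by
    have := hFsum.prod_symm
    exact this.congr fun p => rfl
  have htsumGF : ∑' p, G p = ∑' p, F p := by
    have := (Equiv.prodComm E E).tsum_eq F
    exact this ▸ rfl
  have hSF : ∑' p, F p = ∑' k, π k * g k := by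
    rw [Summable.tsum_prod' hFsum (fun k => ((hπP k).summable.mul_right (g k)))]
    exact tsum_congr hcol
  have hGinner : ∀ a, Summable fun k => π a * P a k * g k := by
    intro a
    refine ((hgsumm a).mul_left (π a)).congr fun k => by ring
  have hSG : ∑' p, G p = ∑' a, π a * ∑' k, P a k * g k := by
    rw [Summable.tsum_prod' hGsum hGinner]
    refine tsum_congr fun a => ?_
    rw [← tsum_mul_left]
    exact tsum_congr fun k => by ring
  set A : E → ℝ := fun a => ∑' k, P a k * g k with hA
  have hAsum : Summable fun a => π a * A a := by
    have := ((summable_prod_of_nonneg hG0).mp hGsum).2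
    refine this.congr fun a => ?_
    simp only [hG, hA]
    rw [← tsum_mul_left]
    exact tsum_congr fun k => by ring
  have hDeq : ∑' a, (π a * A a - π a * g a) = 0 := by
    rw [Summable.tsum_sub hAsum hπg, ← hSG, ← hSF, htsumGF, sub_self]
  have heq : ∀ a, A a = g a := by
    intro a
    have hD0 : ∀ b, 0 ≤ π b * A b - π b * g b := by
      intro b
      have := hsub b
      nlinarith [hπ0 b]
    have hDsum : Summable fun b => π b * A b - π b * g b := hAsum.sub hπg
    have hle : π a * A a - π a * g a ≤ 0 := by
      have := Summable.le_tsum hDsum a (fun c _ => hD0 c)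
      rwa [hDeq] at this
    have := hD0 a
    have hpa := hπpos a
    nlinarith
  have hgHasSum : ∀ a, HasSum (fun k => P a k * g k) (g a) :=
    fun a => (heq a) ▸ (hgsumm a).hasSum
  -- sign propagation
  have hprop_le : ∀ a, f a ≤ 0 → ∀ k, 0 < P a k → f k ≤ 0 := by
    intro a ha k hk
    have hts : HasSum (fun k => P a k * (g k + f k)) 0 := by
      have := (hgHasSum a).add (hfharm a)
      have h0 : g a + f a = 0 := by
        simp only [hg]; rw [abs_of_nonpos ha]; ring
      have hfe : (fun k => P a k * g k + P a k * f k) = fun k => P a k * (g k + f k) :=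
        funext fun k => by ring
      rwa [h0, hfe] at this
    have hnn : ∀ k, 0 ≤ P a k * (g k + f k) := by
      intro k
      refine mul_nonneg (hP0 a k) ?_
      simp only [hg]
      nlinarith [abs_nonneg (f k), neg_abs_le (f k)]
    have hle : P a k * (g k + f k) ≤ 0 := by
      have := Summable.le_tsum hts.summable k (fun c _ => hnn c)
      rwa [hts.tsum_eq] at this
    have : g k + f k = 0 := by nlinarith [hnn k]
    simp only [hg] at this
    nlinarith [abs_nonneg (f k)]
  have hprop_ge : ∀ a, 0 ≤ f a → ∀ k, 0 < P a k → 0 ≤ f k := by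
    intro a ha k hk
    have hts : HasSum (fun k => P a k * (g k - f k)) 0 := by
      have := (hgHasSum a).sub (hfharm a)
      have h0 : g a - f a = 0 := by
        simp only [hg]; rw [abs_of_nonneg ha]; ring
      have hfe : (fun k => P a k * g k - P a k * f k) = fun k => P a k * (g k - f k) :=
        funext fun k => by ring
      rwa [h0, hfe] at this
    have hnn : ∀ k, 0 ≤ P a k * (g k - f k) := by
      intro k
      refine mul_nonneg (hP0 a k) ?_
      simp only [hg]
      nlinarith [le_abs_self (f k)]
    have hle : P a k * (g k - f k) ≤ 0 := by
      have := Summable.le_tsum hts.summable k (fun c _ => hnn c)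
      rwa [hts.tsum_eq] at this
    have : g k - f k = 0 := by nlinarith [hnn k]
    simp only [hg] at this
    nlinarith [abs_nonneg (f k)]
  -- conclude along a path from j to i
  obtain ⟨n, -, x, hx0, hxn, hxp⟩ := hirr j i
  have key : ∀ m, m ≤ n → f (x m) = 0 := by
    intro m
    induction m with
    | zero => intro _; rw [hx0]; simp [hf]
    | succ m ih =>
      intro hm
      have hm' : f (x m) = 0 := ih (Nat.le_of_succ_le hm)
      have hp := hxp m (Nat.lt_of_succ_le hm)
      have h1 := hprop_le (x m) (le_of_eq hm') (x (m+1)) hp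
      have h2 := hprop_ge (x m) (ge_of_eq hm') (x (m+1)) hp
      linarith
  have := key n le_rfl
  rw [hxn] at this
  simp only [hf] at this
  linarith
end

section
/- Let E be a countable type, let P be an irreducible transition matrix on E, and let π be an invariant probability vector of P. Suppose X₁ and X₂ are two solutions of Poisson's equation in matrix form for P and π such that, for every j ∈ E, the family (π(i)·(|X₁(i,j)| + |X₂(i,j)|))_{i∈E} is summable. Then there exists β : E → ℝ such that X₁(i,j) = X₂(i,j) + β(j) for all i, j ∈ E. -/
open BigOperators

theorem stmt5 {E : Type*} [Countable E] [DecidableEq E]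
    (P : E → E → ℝ) (hP0 : ∀ i j, 0 ≤ P i j) (hP1 : ∀ i, HasSum (P i) 1)
    (hirr : ∀ i j, ∃ n, 1 ≤ n ∧ ∃ x : ℕ → E, x 0 = i ∧ x n = j ∧
      ∀ k < n, 0 < P (x k) (x (k + 1)))
    (π : E → ℝ) (hπ0 : ∀ i, 0 ≤ π i) (hπ1 : ∑' i, π i = 1)
    (hπP : ∀ j, HasSum (fun i => π i * P i j) (π j))
    (X₁ X₂ : E → E → ℝ)
    (hX₁sum : ∀ i j, Summable fun k => P i k * X₁ k j)
    (hX₁ : ∀ i j, X₁ i j - ∑' k, P i k * X₁ k j = (if i = j then (1 : ℝ) else 0) - π j)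
    (hX₂sum : ∀ i j, Summable fun k => P i k * X₂ k j)
    (hX₂ : ∀ i j, X₂ i j - ∑' k, P i k * X₂ k j = (if i = j then (1 : ℝ) else 0) - π j)
    (hπX : ∀ j, Summable fun i => π i * (|X₁ i j| + |X₂ i j|)) :
    ∃ β : E → ℝ, ∀ i j, X₁ i j = X₂ i j + β j := by
  -- π is summable
  have hπsum : Summable π := by
    by_contra h
    rw [tsum_eq_zero_of_not_summable h] at hπ1
    norm_num at hπ1
  -- there is a state with positive mass
  have hex : ∃ i₀, 0 < π i₀ := by
    by_contra h
    push_neg at h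
    have hz : ∀ i, π i = 0 := fun i => le_antisymm (h i) (hπ0 i)
    simp only [hz, tsum_zero] at hπ1
    norm_num at hπ1
  obtain ⟨i₀, hi₀⟩ := hex
  -- π is everywhere positive, by irreducibility
  have hπpos : ∀ i, 0 < π i := by
    intro i
    obtain ⟨n, hn, x, hx0, hxn, hxp⟩ := hirr i₀ i
    have key : ∀ m, m ≤ n → 0 < π (x m) := by
      intro m
      induction m with
      | zero => intro _; rw [hx0]; exact hi₀
      | succ m ih =>
        intro hm
        have h1 : 0 < π (x m) := ih (Nat.le_of_succ_le hm)
        have h2 : 0 < P (x m) (x (m + 1)) := hxp m (Nat.lt_of_succ_le hm)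
        have h3 : π (x m) * P (x m) (x (m + 1)) ≤ π (x (m + 1)) :=
          le_hasSum (hπP (x (m + 1))) (x m) (fun k _ => mul_nonneg (hπ0 k) (hP0 k _))
        calc 0 < π (x m) * P (x m) (x (m + 1)) := mul_pos h1 h2
          _ ≤ π (x (m + 1)) := h3
    have := key n le_rfl
    rwa [hxn] at this
  refine ⟨fun j => X₁ i₀ j - X₂ i₀ j, fun i j => ?_⟩
  -- Y is the difference of the two solutions, c its value at i₀, W = Y - c
  set Y : E → ℝ := fun k => X₁ k j - X₂ k j with hYdef
  set c : ℝ := Y i₀ with hcdef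
  set W : E → ℝ := fun k => Y k - c with hWdef
  suffices hWi : W i = 0 by
    have h : Y i - c = 0 := hWi
    simp only [hYdef, hcdef] at h
    show X₁ i j = X₂ i j + (X₁ i₀ j - X₂ i₀ j)
    linarith
  -- Y is harmonic
  have hYsum : ∀ i', Summable fun k => P i' k * Y k := by
    intro i'
    have := (hX₁sum i' j).sub (hX₂sum i' j)
    simpa [hYdef, mul_sub] using this
  have hYeq : ∀ i', Y i' = ∑' k, P i' k * Y k := by
    intro i'
    have h1 := hX₁ i' j
    have h2 := hX₂ i' j
    have h3 : ∑' k, P i' k * Y k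
        = (∑' k, P i' k * X₁ k j) - ∑' k, P i' k * X₂ k j := by
      rw [← Summable.tsum_sub (hX₁sum i' j) (hX₂sum i' j)]
      congr 1 with k
      simp [hYdef, mul_sub]
    simp only [hYdef]
    rw [h3]
    linarith
  -- W is harmonic
  have hWsum : ∀ i', Summable fun k => P i' k * W k := by
    intro i'
    have := (hYsum i').sub ((hP1 i').summable.mul_right c)
    simpa [hWdef, mul_sub] using this
  have hWeq : ∀ i', W i' = ∑' k, P i' k * W k := by
    intro i'
    have h3 : ∑' k, P i' k * W k = (∑' k, P i' k * Y k) - (∑' k, P i' k) * c := by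
      rw [← tsum_mul_right, ← Summable.tsum_sub (hYsum i') ((hP1 i').summable.mul_right c)]
      congr 1 with k
      simp [hWdef, mul_sub]
    rw [h3, (hP1 i').tsum_eq, ← hYeq i']
    simp [hWdef]
  -- π · |W| is summable
  have habsW : Summable fun k => π k * |W k| := by
    refine Summable.of_nonneg_of_le (fun k => mul_nonneg (hπ0 k) (abs_nonneg _))
      (fun k => ?_) ((hπX j).add (hπsum.mul_right |c|))
    have h1 : |W k| ≤ (|X₁ k j| + |X₂ k j|) + |c| := by
      simp only [hWdef, hYdef]
      calc |X₁ k j - X₂ k j - c| ≤ |X₁ k j - X₂ k j| + |c| := abs_sub _ _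
        _ ≤ (|X₁ k j| + |X₂ k j|) + |c| := by
            have := abs_sub (X₁ k j) (X₂ k j)
            linarith
    calc π k * |W k| ≤ π k * ((|X₁ k j| + |X₂ k j|) + |c|) :=
          mul_le_mul_of_nonneg_left h1 (hπ0 k)
      _ = π k * (|X₁ k j| + |X₂ k j|) + π k * |c| := by ring
  -- P · |W| is summable in each row
  have habsWP : ∀ i', Summable fun k => P i' k * |W k| := by
    intro i'
    have := (hWsum i').abs
    refine this.congr fun k => ?_
    rw [abs_mul, abs_of_nonneg (hP0 i' k)]
  -- subharmonicity of |W|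
  have hsub : ∀ i', |W i'| ≤ ∑' k, P i' k * |W k| := by
    intro i'
    rw [hWeq i']
    have hn : Summable fun k => ‖P i' k * W k‖ := by
      refine (habsWP i').congr fun k => ?_
      rw [Real.norm_eq_abs, abs_mul, abs_of_nonneg (hP0 i' k)]
    calc |∑' k, P i' k * W k| = ‖∑' k, P i' k * W k‖ := (Real.norm_eq_abs _).symm
      _ ≤ ∑' k, ‖P i' k * W k‖ := norm_tsum_le_tsum_norm hn
      _ = ∑' k, P i' k * |W k| := by
          congr 1 with k
          rw [Real.norm_eq_abs, abs_mul, abs_of_nonneg (hP0 i' k)]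
  -- the product family g (k, i) = π i * P i k * |W k| is summable
  have hg : Summable fun p : E × E => π p.2 * P p.2 p.1 * |W p.1| := by
    rw [summable_prod_of_nonneg
      (fun p => mul_nonneg (mul_nonneg (hπ0 _) (hP0 _ _)) (abs_nonneg _))]
    constructor
    · intro k
      exact ((hπP k).summable.mul_right |W k|).congr fun i' => by ring
    · refine habsW.congr fun k => ?_
      show π k * |W k| = ∑' i', π i' * P i' k * |W k|
      rw [← (hπP k).tsum_eq, ← tsum_mul_right]
  have hf : Summable fun p : E × E => π p.1 * P p.1 p.2 * |W p.2| := by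
    have := hg.prod_symm
    exact this.congr fun p => by simp [Prod.swap]
  -- Fubini: ∑' i, π i * (∑' k, P i k * |W k|) = ∑' k, π k * |W k|
  have hA : Summable fun i' => π i' * ∑' k, P i' k * |W k| := by
    have := ((summable_prod_of_nonneg
      (fun p : E × E => mul_nonneg (mul_nonneg (hπ0 _) (hP0 _ _)) (abs_nonneg _))).mp hf).2
    refine this.congr fun i' => ?_
    show (∑' k, π i' * P i' k * |W k|) = π i' * ∑' k, P i' k * |W k|
    rw [← tsum_mul_left]
    congr 1 with k
    ring
  have hfub : ∑' i', π i' * ∑' k, P i' k * |W k| = ∑' k, π k * |W k| := by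
    have e1 : ∑' i', π i' * ∑' k, P i' k * |W k|
        = ∑' p : E × E, π p.1 * P p.1 p.2 * |W p.2| := by
      rw [Summable.tsum_prod' hf (fun i' => ((habsWP i').mul_left (π i')).congr fun k => by ring)]
      congr 1 with i'
      rw [← tsum_mul_left]
      congr 1 with k
      ring
    have e2 : ∑' p : E × E, π p.1 * P p.1 p.2 * |W p.2|
        = ∑' p : E × E, π p.2 * P p.2 p.1 * |W p.1| := by
      rw [← (Equiv.prodComm E E).tsum_eq (fun p : E × E => π p.1 * P p.1 p.2 * |W p.2|)]
      rfl
    have e3 : ∑' p : E × E, π p.2 * P p.2 p.1 * |W p.1| = ∑' k, π k * |W k| := by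
      rw [Summable.tsum_prod' hg (fun k => ((hπP k).summable.mul_right |W k|).congr fun i' => by ring)]
      congr 1 with k
      show (∑' i', π i' * P i' k * |W k|) = π k * |W k|
      rw [tsum_mul_right, (hπP k).tsum_eq]
    rw [e1, e2, e3]
  -- the defect t i = π i * (∑' k, P i k * |W k| - |W i|) is nonneg, summable, sums to 0
  set t : E → ℝ := fun i' => π i' * (∑' k, P i' k * |W k|) - π i' * |W i'| with htdef
  have ht0 : ∀ i', 0 ≤ t i' := fun i' => by
    have := mul_le_mul_of_nonneg_left (hsub i') (hπ0 i')
    simp only [htdef]; linarith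
  have htsum : Summable t := hA.sub habsW
  have httot : ∑' i', t i' = 0 := by
    rw [Summable.tsum_sub hA habsW, hfub, sub_self]
  have hteq : ∀ i', t i' = 0 := by
    intro i'
    have h1 : t i' ≤ ∑' i', t i' := Summable.le_tsum htsum i' (fun k _ => ht0 k)
    rw [httot] at h1
    exact le_antisymm h1 (ht0 i')
  -- equality in subharmonicity
  have heq : ∀ i', ∑' k, P i' k * |W k| = |W i'| := by
    intro i'
    have := hteq i'
    have hp := hπpos i'
    simp only [htdef] at this
    have : π i' * ((∑' k, P i' k * |W k|) - |W i'|) = 0 := by linarith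
    rcases mul_eq_zero.mp this with h | h
    · exact absurd h (ne_of_gt hp)
    · linarith
  -- propagation of W = 0 along paths from i₀
  have hWi₀ : W i₀ = 0 := by simp [hWdef, hcdef]
  have hprop : ∀ i', W i' = 0 := by
    intro i'
    obtain ⟨n, hn, x, hx0, hxn, hxp⟩ := hirr i₀ i'
    have key : ∀ m, m ≤ n → W (x m) = 0 := by
      intro m
      induction m with
      | zero => intro _; rw [hx0]; exact hWi₀
      | succ m ih =>
        intro hm
        have h1 : W (x m) = 0 := ih (Nat.le_of_succ_le hm)
        have h2 : 0 < P (x m) (x (m + 1)) := hxp m (Nat.lt_of_succ_le hm)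
        have h3 : ∑' k, P (x m) k * |W k| = 0 := by
          rw [heq (x m), h1, abs_zero]
        have h4 : P (x m) (x (m + 1)) * |W (x (m + 1))| ≤ 0 := by
          rw [← h3]
          exact Summable.le_tsum (habsWP (x m)) (x (m + 1))
            (fun k _ => mul_nonneg (hP0 _ _) (abs_nonneg _))
        have h5 : 0 ≤ P (x m) (x (m + 1)) * |W (x (m + 1))| :=
          mul_nonneg (hP0 _ _) (abs_nonneg _)
        have h6 : P (x m) (x (m + 1)) * |W (x (m + 1))| = 0 := le_antisymm h4 h5
        rcases mul_eq_zero.mp h6 with h | h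
        · exact absurd h (ne_of_gt h2)
        · exact abs_eq_zero.mp h
    have := key n le_rfl
    rwa [hxn] at this
  exact hprop i
end

section
/- Let E be a finite nonempty type, let P be an irreducible stochastic matrix on E, and let A ⊆ E be a nonempty subset with complement B. Then the series ∑_{k=0}^∞ (P_{BB})^k converges in the space of B×B real matrices, the matrix I − P_{BB} is invertible, the sum of the series equals (I − P_{BB})^{-1}, and every entry of (I − P_{BB})^{-1} is nonnegative. -/
open Matrix BigOperators

/-- The submatrix of `P` with rows indexed by `S` and columns indexed by `T`. -/
def subBlock {E : Type*} (P : Matrix E E ℝ) (S T : Set E) : Matrix ↥S ↥T ℝ :=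
  Matrix.of fun i j => P i j

section Aux

variable {ι : Type*} [Fintype ι]

lemma auxMulNonneg {M N : Matrix ι ι ℝ} (hM : ∀ i j, 0 ≤ M i j) (hN : ∀ i j, 0 ≤ N i j) :
    ∀ i j, 0 ≤ (M * N) i j := by
  intro i j
  rw [Matrix.mul_apply]
  exact Finset.sum_nonneg fun l _ => mul_nonneg (hM i l) (hN l j)

lemma auxPowNonneg [DecidableEq ι] {M : Matrix ι ι ℝ} (hM : ∀ i j, 0 ≤ M i j) (n : ℕ) :
    ∀ i j, 0 ≤ (M ^ n) i j := by
  induction n with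
  | zero =>
    intro i j
    simp only [pow_zero, Matrix.one_apply]
    split <;> norm_num
  | succ n ih =>
    rw [pow_succ]
    exact auxMulNonneg ih hM

lemma auxRowsumMul (M N : Matrix ι ι ℝ) (i : ι) :
    ∑ j, (M * N) i j = ∑ l, M i l * ∑ j, N l j := by
  simp only [Matrix.mul_apply, Finset.mul_sum]
  exact Finset.sum_comm

lemma auxRowsumLe (M N : Matrix ι ι ℝ) (hM : ∀ i j, 0 ≤ M i j)
    (hN : ∀ l, ∑ j, N l j ≤ 1) (_hN0 : ∀ i j, 0 ≤ N i j) (i : ι) :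
    ∑ j, (M * N) i j ≤ ∑ j, M i j := by
  rw [auxRowsumMul]
  refine Finset.sum_le_sum fun l _ => ?_
  calc M i l * ∑ j, N l j ≤ M i l * 1 := by
        exact mul_le_mul_of_nonneg_left (hN l) (hM i l)
    _ = M i l := mul_one _

lemma auxSumSubtypeLe {E : Type*} [Fintype E] (s : Set E) [DecidablePred (· ∈ s)]
    (g : E → ℝ) (hg : ∀ x, 0 ≤ g x) : ∑ x : ↥s, g ↑x ≤ ∑ x, g x := by
  classical
  rw [← Finset.sum_subtype s.toFinset (fun x => Set.mem_toFinset) g]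
  exact Finset.sum_le_sum_of_subset_of_nonneg (Finset.subset_univ _) fun x _ _ => hg x

end Aux

theorem stmt6 {E : Type*} [Fintype E] [Nonempty E] [DecidableEq E]
    (P : Matrix E E ℝ)
    (hP0 : ∀ i j, 0 ≤ P i j) (hP1 : ∀ i, ∑ j, P i j = 1)
    (hirr : ∀ i j, ∃ n, 1 ≤ n ∧ 0 < (P ^ n) i j)
    (A : Set E) [DecidablePred (· ∈ A)] (hA : A.Nonempty) :
    HasSum (fun k : ℕ => subBlock P Aᶜ Aᶜ ^ k) (1 - subBlock P Aᶜ Aᶜ)⁻¹ ∧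
    IsUnit (1 - subBlock P Aᶜ Aᶜ) ∧
    ∀ i j, 0 ≤ (1 - subBlock P Aᶜ Aᶜ)⁻¹ i j := by
  classical
  set Q : Matrix ↥Aᶜ ↥Aᶜ ℝ := subBlock P Aᶜ Aᶜ with hQdef
  by_cases hB : Nonempty ↥(Aᶜ : Set E)
  swap
  · -- empty complement: the matrix space is trivial
    haveI : IsEmpty ↥(Aᶜ : Set E) := not_nonempty_iff.1 hB
    haveI : Subsingleton (Matrix ↥(Aᶜ : Set E) ↥(Aᶜ : Set E) ℝ) :=
      inferInstanceAs (Subsingleton (↥(Aᶜ : Set E) → ↥(Aᶜ : Set E) → ℝ))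
    refine ⟨?_, isUnit_of_subsingleton _, fun i => absurd (Set.mem_univ i) (by exact fun _ => (IsEmpty.false i))⟩
    have h1 : (fun k : ℕ => Q ^ k) = fun _ => (0 : Matrix ↥(Aᶜ : Set E) ↥(Aᶜ : Set E) ℝ) :=
      funext fun _ => Subsingleton.elim _ _
    rw [h1, Subsingleton.elim ((1 - Q)⁻¹) 0]
    exact hasSum_zero
  obtain ⟨a, haA⟩ := hA
  have hQ0 : ∀ i j, 0 ≤ Q i j := fun i j => hP0 i j
  have hQn0 : ∀ n (i j : ↥(Aᶜ : Set E)), 0 ≤ (Q ^ n) i j := fun n => auxPowNonneg hQ0 n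
  have hPn0 : ∀ n (i j : E), 0 ≤ (P ^ n) i j := fun n => auxPowNonneg hP0 n
  have hPn1 : ∀ n i, ∑ j, (P ^ n) i j = 1 := by
    intro n
    induction n with
    | zero => intro i; simp [Matrix.one_apply]
    | succ n ih =>
      intro i
      rw [pow_succ, auxRowsumMul]
      simp only [hP1]
      simp [ih i]
  -- entries of powers of Q are dominated by entries of powers of P
  have key : ∀ n (i j : ↥(Aᶜ : Set E)), (Q ^ n) i j ≤ (P ^ n) ↑i ↑j := by
    intro n
    induction n with
    | zero =>
      intro i j
      by_cases h : i = j
      · subst h; simp [Matrix.one_apply]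
      · rw [pow_zero, pow_zero, Matrix.one_apply_ne h]
        exact hPn0 0 i j
    | succ n ih =>
      intro i j
      rw [pow_succ, pow_succ, Matrix.mul_apply, Matrix.mul_apply]
      calc ∑ l : ↥(Aᶜ : Set E), (Q ^ n) i l * Q l j
          ≤ ∑ l : ↥(Aᶜ : Set E), (P ^ n) ↑i ↑l * P ↑l ↑j := by
            refine Finset.sum_le_sum fun l _ => ?_
            exact mul_le_mul (ih i l) le_rfl (hQ0 l j) (hPn0 n i l)
        _ ≤ ∑ l : E, (P ^ n) ↑i l * P l ↑j :=
            auxSumSubtypeLe _ _ (fun l => mul_nonneg (hPn0 n i l) (hP0 l j))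
  -- row sums of powers of Q are at most 1
  have hrs1 : ∀ n (i : ↥(Aᶜ : Set E)), ∑ j, (Q ^ n) i j ≤ 1 := by
    intro n i
    calc ∑ j, (Q ^ n) i j ≤ ∑ j : ↥(Aᶜ : Set E), (P ^ n) ↑i ↑j :=
          Finset.sum_le_sum fun j _ => key n i j
      _ ≤ ∑ j, (P ^ n) ↑i j := auxSumSubtypeLe _ _ (fun j => hPn0 n i j)
      _ = 1 := hPn1 n i
  -- monotonicity of row sums
  have hmono : ∀ m n (i : ↥(Aᶜ : Set E)), ∑ j, (Q ^ (m + n)) i j ≤ ∑ j, (Q ^ m) i j := by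
    intro m n i
    rw [pow_add]
    exact auxRowsumLe _ _ (hQn0 m) (hrs1 n) (hQn0 n) i
  -- for each state in B there is a time at which the row sum drops below 1
  have hni : ∀ i : ↥(Aᶜ : Set E), ∃ n, 1 ≤ n ∧ ∑ j, (Q ^ n) i j < 1 := by
    intro i
    obtain ⟨n, hn1, hpos⟩ := hirr ↑i a
    refine ⟨n, hn1, ?_⟩
    have h1 : ∑ j : ↥(Aᶜ : Set E), (Q ^ n) i j ≤ ∑ j : ↥(Aᶜ : Set E), (P ^ n) ↑i ↑j :=
      Finset.sum_le_sum fun j _ => key n i j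
    have h2 : ∑ j : ↥(Aᶜ : Set E), (P ^ n) ↑i ↑j = ∑ j ∈ (Aᶜ : Set E).toFinset, (P ^ n) ↑i j :=
      (Finset.sum_subtype _ (fun x => Set.mem_toFinset) _).symm
    have h3 : ∑ j ∈ (Aᶜ : Set E).toFinset, (P ^ n) ↑i j
        + ∑ j ∈ A.toFinset, (P ^ n) ↑i j = 1 := by
      rw [Set.toFinset_compl, Finset.sum_compl_add_sum]
      exact hPn1 n i
    have h4 : (P ^ n) ↑i a ≤ ∑ j ∈ A.toFinset, (P ^ n) ↑i j :=
      Finset.single_le_sum (fun j _ => hPn0 n i j) (Set.mem_toFinset.2 haA)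
    have h5 : 0 < ∑ j ∈ A.toFinset, (P ^ n) ↑i j := lt_of_lt_of_le hpos h4
    rw [h2] at h1
    linarith
  choose nf hnf1 hnflt using hni
  set N : ℕ := Finset.univ.sup nf with hNdef
  have hle : ∀ i, nf i ≤ N := fun i => Finset.le_sup (Finset.mem_univ i)
  have hN1 : 1 ≤ N := le_trans (hnf1 (Classical.arbitrary _)) (hle _)
  have hrsN : ∀ i, ∑ j, (Q ^ N) i j < 1 := by
    intro i
    have h := hmono (nf i) (N - nf i) i
    rw [Nat.add_sub_cancel' (hle i)] at h
    exact lt_of_le_of_lt h (hnflt i)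
  haveI : Nonempty ↥(Aᶜ : Set E) := hB
  set c : ℝ := max (1 / 2) (Finset.univ.sup' Finset.univ_nonempty (fun i => ∑ j, (Q ^ N) i j))
    with hcdef
  have hc0 : 0 < c := lt_of_lt_of_le one_half_pos (le_max_left _ _)
  have hc1 : c < 1 := by
    refine max_lt (by norm_num) ?_
    exact (Finset.sup'_lt_iff _).2 fun i _ => hrsN i
  have hcge : ∀ i, ∑ j, (Q ^ N) i j ≤ c :=
    fun i => le_trans (Finset.le_sup' (fun i => ∑ j, (Q ^ N) i j) (Finset.mem_univ i)) (le_max_right _ _)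
  -- geometric decay of row sums
  have hgeo : ∀ q (i : ↥(Aᶜ : Set E)), ∑ j, (Q ^ (N * q)) i j ≤ c ^ q := by
    intro q
    induction q with
    | zero => intro i; simp [Matrix.one_apply]
    | succ q ih =>
      intro i
      have hexp : N * (q + 1) = N + N * q := by ring
      rw [hexp, pow_add]
      calc ∑ j, ((Q ^ N) * (Q ^ (N * q))) i j
          = ∑ l, (Q ^ N) i l * ∑ j, (Q ^ (N * q)) l j := auxRowsumMul _ _ i
        _ ≤ ∑ l, (Q ^ N) i l * c ^ q :=
            Finset.sum_le_sum fun l _ => mul_le_mul_of_nonneg_left (ih l) (hQn0 N i l)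
        _ = (∑ l, (Q ^ N) i l) * c ^ q := (Finset.sum_mul _ _ _).symm
        _ ≤ c * c ^ q :=
            mul_le_mul_of_nonneg_right (hcge i) (pow_nonneg hc0.le q)
        _ = c ^ (q + 1) := (pow_succ' c q).symm
  -- entrywise bound
  have hentry : ∀ k (i j : ↥(Aᶜ : Set E)), (Q ^ k) i j ≤ c ^ (k / N) := by
    intro k i j
    have h1 : (Q ^ k) i j ≤ ∑ j', (Q ^ k) i j' :=
      Finset.single_le_sum (fun l _ => hQn0 k i l) (Finset.mem_univ j)
    have h2 : ∑ j', (Q ^ k) i j' ≤ ∑ j', (Q ^ (N * (k / N))) i j' := by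
      have h := hmono (N * (k / N)) (k % N) i
      rwa [Nat.div_add_mod] at h
    exact le_trans h1 (le_trans h2 (hgeo (k / N) i))
  -- summability of the majorant
  set r : ℝ := c ^ ((N : ℝ)⁻¹) with hrdef
  have hNpos : (0 : ℝ) < N := by exact_mod_cast hN1
  have hr0 : 0 ≤ r := Real.rpow_nonneg hc0.le _
  have hr1 : r < 1 := Real.rpow_lt_one hc0.le hc1 (by positivity)
  have hbound : ∀ k : ℕ, c ^ (k / N) ≤ c⁻¹ * r ^ k := by
    intro k
    have hrk : r ^ k = c ^ ((N : ℝ)⁻¹ * k) := by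
      rw [Real.rpow_mul hc0.le, Real.rpow_natCast]
    have hck : c ^ (k / N) = c ^ (((k / N : ℕ) : ℝ)) := (Real.rpow_natCast c (k / N)).symm
    have hexp : (N : ℝ)⁻¹ * k - 1 ≤ ((k / N : ℕ) : ℝ) := by
      have h1 : N * (k / N) + k % N = k := Nat.div_add_mod k N
      have h2 : k % N < N := Nat.mod_lt _ (by omega)
      have h1' : (N : ℝ) * ((k / N : ℕ) : ℝ) + ((k % N : ℕ) : ℝ) = k := by exact_mod_cast h1
      have h2' : ((k % N : ℕ) : ℝ) < N := by exact_mod_cast h2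
      rw [sub_le_iff_le_add, inv_mul_le_iff₀ hNpos]
      nlinarith
    have hmonoexp : c ^ (((k / N : ℕ) : ℝ)) ≤ c ^ ((N : ℝ)⁻¹ * k - 1) := by
      exact Real.rpow_le_rpow_of_exponent_ge hc0 hc1.le hexp
    have hsplit : c ^ ((N : ℝ)⁻¹ * k - 1) = c⁻¹ * c ^ ((N : ℝ)⁻¹ * k) := by
      rw [Real.rpow_sub hc0, Real.rpow_one]
      ring
    rw [hck, hrk]
    rw [hsplit] at hmonoexp
    exact le_trans hmonoexp (le_of_eq rfl)
  have hsum_maj : Summable (fun k : ℕ => c⁻¹ * r ^ k) :=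
    (summable_geometric_of_lt_one hr0 hr1).mul_left _
  have hsummaj2 : Summable (fun k : ℕ => c ^ (k / N)) :=
    hsum_maj.of_nonneg_of_le (fun k => pow_nonneg hc0.le _) hbound
  have hsumentry : ∀ (i j : ↥(Aᶜ : Set E)), Summable (fun k => (Q ^ k) i j) := fun i j =>
    hsummaj2.of_nonneg_of_le (fun k => hQn0 k i j) (fun k => hentry k i j)
  -- the sum matrix
  set S : Matrix ↥(Aᶜ : Set E) ↥(Aᶜ : Set E) ℝ := Matrix.of fun i j => ∑' k, (Q ^ k) i j
    with hSdef
  have hS : ∀ i j, HasSum (fun k => (Q ^ k) i j) (S i j) := fun i j => (hsumentry i j).hasSum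
  have hHasSum : HasSum (fun k : ℕ => Q ^ k) S := Pi.hasSum.2 fun i => Pi.hasSum.2 fun j => hS i j
  -- the algebraic identities
  have hQS : Q * S = S - 1 := by
    ext i j
    rw [Matrix.mul_apply]
    have h1 : ∀ l : ↥(Aᶜ : Set E), Q i l * S l j = ∑' k, Q i l * (Q ^ k) l j := by
      intro l
      exact (tsum_mul_left).symm
    calc ∑ l, Q i l * S l j = ∑ l, ∑' k, Q i l * (Q ^ k) l j := Finset.sum_congr rfl fun l _ => h1 l
      _ = ∑' k, ∑ l, Q i l * (Q ^ k) l j := by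
          rw [Summable.tsum_finsetSum fun l _ => (hsumentry l j).mul_left _]
      _ = ∑' k, (Q ^ (k + 1)) i j := by
          refine tsum_congr fun k => ?_
          rw [pow_succ', Matrix.mul_apply]
      _ = S i j - (1 : Matrix ↥(Aᶜ : Set E) ↥(Aᶜ : Set E) ℝ) i j := by
          have h := Summable.tsum_eq_zero_add (hsumentry i j)
          have : (Q ^ 0) i j = (1 : Matrix ↥(Aᶜ : Set E) ↥(Aᶜ : Set E) ℝ) i j := by rw [pow_zero]
          rw [this] at h
          have hSij : S i j = ∑' k, (Q ^ k) i j := rfl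
          rw [hSij, h]
          ring
      _ = (S - 1) i j := by simp [Matrix.sub_apply]
  have hSQ : S * Q = S - 1 := by
    ext i j
    rw [Matrix.mul_apply]
    have h1 : ∀ l : ↥(Aᶜ : Set E), S i l * Q l j = ∑' k, (Q ^ k) i l * Q l j := by
      intro l
      exact (tsum_mul_right).symm
    calc ∑ l, S i l * Q l j = ∑ l, ∑' k, (Q ^ k) i l * Q l j :=
          Finset.sum_congr rfl fun l _ => h1 l
      _ = ∑' k, ∑ l, (Q ^ k) i l * Q l j := by
          rw [Summable.tsum_finsetSum fun l _ => (hsumentry i l).mul_right _]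
      _ = ∑' k, (Q ^ (k + 1)) i j := by
          refine tsum_congr fun k => ?_
          rw [pow_succ, Matrix.mul_apply]
      _ = S i j - (1 : Matrix ↥(Aᶜ : Set E) ↥(Aᶜ : Set E) ℝ) i j := by
          have h := Summable.tsum_eq_zero_add (hsumentry i j)
          have : (Q ^ 0) i j = (1 : Matrix ↥(Aᶜ : Set E) ↥(Aᶜ : Set E) ℝ) i j := by rw [pow_zero]
          rw [this] at h
          have hSij : S i j = ∑' k, (Q ^ k) i j := rfl
          rw [hSij, h]
          ring
      _ = (S - 1) i j := by simp [Matrix.sub_apply]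
  have hleft : (1 - Q) * S = 1 := by
    rw [sub_mul, one_mul, hQS]
    abel
  have hright : S * (1 - Q) = 1 := by
    rw [mul_sub, mul_one, hSQ]
    abel
  have hinv : (1 - Q)⁻¹ = S := Matrix.inv_eq_right_inv hleft
  refine ⟨?_, ?_, ?_⟩
  · rw [hinv]; exact hHasSum
  · exact ⟨⟨1 - Q, S, hleft, hright⟩, rfl⟩
  · intro i j
    rw [hinv]
    exact tsum_nonneg fun k => hQn0 k i j
end

section
/- Let E be a finite nonempty type, let P be an irreducible stochastic matrix on E, and let A ⊆ E be a nonempty subset with complement B. Then I − P_{BB} is invertible and the censored matrix P^{(A)} := P_{AA} + P_{AB} (I − P_{BB})^{-1} P_{BA} is a stochastic matrix on A: all its entries are nonnegative and each of its rows sums to 1. -/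
open Matrix BigOperators

namespace Stmt7Aux

variable {ι : Type*} [Fintype ι] [DecidableEq ι]

lemma pow_nn (Q : Matrix ι ι ℝ) (h0 : ∀ i j, 0 ≤ Q i j) (n : ℕ) :
    ∀ i j, 0 ≤ (Q ^ n) i j := by
  induction n with
  | zero =>
    intro i j
    rw [pow_zero, Matrix.one_apply]
    split <;> norm_num
  | succ n ih =>
    intro i j
    rw [pow_succ, Matrix.mul_apply]
    exact Finset.sum_nonneg fun k _ => mul_nonneg (ih i k) (h0 k j)

omit [DecidableEq ι] in
lemma rowsum_mul (M N : Matrix ι ι ℝ) (i : ι) :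
    ∑ j, (M * N) i j = ∑ k, M i k * ∑ j, N k j := by
  simp_rw [Matrix.mul_apply, Finset.mul_sum]
  exact Finset.sum_comm

omit [DecidableEq ι] in
lemma rowsum_mul_le (M N : Matrix ι ι ℝ) (hM0 : ∀ i j, 0 ≤ M i j) (c : ℝ)
    (hN : ∀ k, ∑ j, N k j ≤ c) (i : ι) :
    ∑ j, (M * N) i j ≤ c * ∑ j, M i j := by
  rw [rowsum_mul]
  calc ∑ k, M i k * ∑ j, N k j ≤ ∑ k, M i k * c :=
        Finset.sum_le_sum fun k _ => mul_le_mul_of_nonneg_left (hN k) (hM0 i k)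
    _ = c * ∑ j, M i j := by rw [← Finset.sum_mul, mul_comm]

lemma pow_rowsum_le_one (Q : Matrix ι ι ℝ) (h0 : ∀ i j, 0 ≤ Q i j)
    (h1 : ∀ i, ∑ j, Q i j ≤ 1) (n : ℕ) :
    ∀ i, ∑ j, (Q ^ n) i j ≤ 1 := by
  induction n with
  | zero => intro i; simp [Matrix.one_apply]
  | succ n ih =>
    intro i
    rw [pow_succ]
    calc ∑ j, (Q ^ n * Q) i j ≤ 1 * ∑ j, (Q ^ n) i j :=
          rowsum_mul_le _ _ (pow_nn Q h0 n) 1 h1 i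
      _ ≤ 1 := by rw [one_mul]; exact ih i

end Stmt7Aux

open Stmt7Aux in
theorem stmt7 {E : Type*} [Fintype E] [Nonempty E] [DecidableEq E]
    (P : Matrix E E ℝ)
    (hP0 : ∀ i j, 0 ≤ P i j) (hP1 : ∀ i, ∑ j, P i j = 1)
    (hirr : ∀ i j, ∃ n, 1 ≤ n ∧ 0 < (P ^ n) i j)
    (A : Set E) [DecidablePred (· ∈ A)] (hA : A.Nonempty) :
    IsUnit (1 - subBlock P Aᶜ Aᶜ) ∧
    (∀ i j : ↥A, 0 ≤ (subBlock P A A +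
      subBlock P A Aᶜ * (1 - subBlock P Aᶜ Aᶜ)⁻¹ * subBlock P Aᶜ A) i j) ∧
    ∀ i : ↥A, ∑ j : ↥A, (subBlock P A A +
      subBlock P A Aᶜ * (1 - subBlock P Aᶜ Aᶜ)⁻¹ * subBlock P Aᶜ A) i j = 1 := by
  set Q : Matrix ↥Aᶜ ↥Aᶜ ℝ := subBlock P Aᶜ Aᶜ with hQdef
  have hQ0 : ∀ i j, 0 ≤ Q i j := fun i j => hP0 _ _
  have hPn0 : ∀ n (i j : E), 0 ≤ (P ^ n) i j := fun n => pow_nn P hP0 n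
  have hPn1 : ∀ n (i : E), ∑ j, (P ^ n) i j = 1 := by
    intro n
    induction n with
    | zero => intro i; simp [Matrix.one_apply]
    | succ n ih =>
      intro i
      rw [pow_succ, rowsum_mul]
      simp_rw [hP1]
      simpa using ih i
  have hsub_le : ∀ (f : E → ℝ), (∀ x, 0 ≤ f x) → ∑ j : ↥Aᶜ, f j ≤ ∑ j : E, f j := by
    intro f hf
    rw [Finset.sum_set_coe]
    exact Finset.sum_le_sum_of_subset_of_nonneg (Finset.subset_univ _) fun x _ _ => hf x
  have hQ1 : ∀ i, ∑ j, Q i j ≤ 1 := by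
    intro i
    calc ∑ j : ↥Aᶜ, Q i j = ∑ j : ↥Aᶜ, P i j := rfl
      _ ≤ ∑ j : E, P i j := hsub_le _ (hP0 i)
      _ = 1 := hP1 i
  have hQP : ∀ n (i j : ↥Aᶜ), (Q ^ n) i j ≤ (P ^ n) i j := by
    intro n
    induction n with
    | zero =>
      intro i j
      rw [pow_zero, pow_zero, Matrix.one_apply, Matrix.one_apply]
      by_cases h : i = j
      · simp [h]
      · rw [if_neg h, if_neg fun e => h (Subtype.ext e)]
    | succ n ih =>
      intro i j
      rw [pow_succ, pow_succ, Matrix.mul_apply, Matrix.mul_apply]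
      calc ∑ b : ↥Aᶜ, (Q ^ n) i b * Q b j
          ≤ ∑ b : ↥Aᶜ, (P ^ n) (i : E) b * P b j :=
            Finset.sum_le_sum fun b _ =>
              mul_le_mul (ih i b) (le_of_eq rfl) (hQ0 b j) (hPn0 n i b)
        _ ≤ ∑ b : E, (P ^ n) (i : E) b * P b j :=
            hsub_le _ fun x => mul_nonneg (hPn0 n i x) (hP0 x j)
  obtain ⟨a, haA⟩ := hA
  have hlt : ∀ i : ↥Aᶜ, ∃ n, ∑ j, (Q ^ n) i j < 1 := by
    intro i
    obtain ⟨n, _, hpos⟩ := hirr (i : E) a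
    refine ⟨n, ?_⟩
    calc ∑ j : ↥Aᶜ, (Q ^ n) i j ≤ ∑ j : ↥Aᶜ, (P ^ n) (i : E) j :=
          Finset.sum_le_sum fun j _ => hQP n i j
      _ = ∑ x ∈ (Aᶜ : Set E).toFinset, (P ^ n) (i : E) x := Finset.sum_set_coe _
      _ ≤ ∑ x ∈ Finset.univ.erase a, (P ^ n) (i : E) x := by
          refine Finset.sum_le_sum_of_subset_of_nonneg ?_ fun x _ _ => hPn0 n i x
          intro x hx
          rw [Set.mem_toFinset] at hx
          exact Finset.mem_erase.2 ⟨fun e => hx (e ▸ haA), Finset.mem_univ x⟩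
      _ = 1 - (P ^ n) (i : E) a := by
          have := Finset.sum_erase_add Finset.univ (fun x => (P ^ n) (i : E) x)
            (Finset.mem_univ a)
          rw [hPn1 n i] at this
          linarith
      _ < 1 := by linarith
  obtain ⟨m, c, hc0, hc1, hcm⟩ :
      ∃ m c, 0 ≤ c ∧ c < 1 ∧ ∀ i : ↥Aᶜ, ∑ j, (Q ^ m) i j ≤ c := by
    rcases isEmpty_or_nonempty ↥Aᶜ with h | h
    · exact ⟨1, 0, le_refl 0, one_pos, fun i => (h.false i).elim⟩
    · choose n hn using hlt
      set m := Finset.univ.sup n with hmdef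
      have hmono : ∀ i : ↥Aᶜ, ∑ j, (Q ^ m) i j ≤ ∑ j, (Q ^ n i) i j := by
        intro i
        have hle : n i ≤ m := Finset.le_sup (Finset.mem_univ i)
        have hm' : m = n i + (m - n i) := (Nat.add_sub_cancel' hle).symm
        rw [hm', pow_add]
        calc ∑ j, (Q ^ n i * Q ^ (m - n i)) i j
            ≤ 1 * ∑ j, (Q ^ n i) i j :=
              rowsum_mul_le _ _ (pow_nn Q hQ0 _) 1
                (pow_rowsum_le_one Q hQ0 hQ1 _) i
          _ = ∑ j, (Q ^ n i) i j := one_mul _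
      have hne : (Finset.univ : Finset ↥Aᶜ).Nonempty := Finset.univ_nonempty
      refine ⟨m, Finset.univ.sup' hne (fun i => ∑ j, (Q ^ m) i j), ?_, ?_,
        fun i => Finset.le_sup' (fun i' => ∑ j, (Q ^ m) i' j) (Finset.mem_univ i)⟩
      · obtain ⟨i⟩ := h
        exact le_trans (Finset.sum_nonneg fun j _ => pow_nn Q hQ0 m i j)
          (Finset.le_sup' (fun i' => ∑ j, (Q ^ m) i' j) (Finset.mem_univ i))
      · rw [Finset.sup'_lt_iff]
        exact fun i _ => lt_of_le_of_lt (hmono i) (hn i)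
  have hck : ∀ k (i : ↥Aᶜ), ∑ j, (Q ^ (m * k)) i j ≤ c ^ k := by
    intro k
    induction k with
    | zero => intro i; simp [Matrix.one_apply]
    | succ k ih =>
      intro i
      have hsp : Q ^ (m * (k + 1)) = Q ^ (m * k) * Q ^ m := by
        rw [← pow_add, Nat.mul_succ]
      rw [hsp, pow_succ]
      calc ∑ j, (Q ^ (m * k) * Q ^ m) i j ≤ c * ∑ j, (Q ^ (m * k)) i j :=
            rowsum_mul_le _ _ (pow_nn Q hQ0 _) c hcm i
        _ ≤ c * c ^ k := mul_le_mul_of_nonneg_left (ih i) hc0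
        _ = c ^ k * c := mul_comm _ _
  have hUnit : IsUnit (1 - Q) := by
    rw [Matrix.isUnit_iff_isUnit_det, isUnit_iff_ne_zero]
    intro hdet0
    obtain ⟨v, hv0, hv⟩ := (Matrix.exists_mulVec_eq_zero_iff).2 hdet0
    have hQv : Q *ᵥ v = v := by
      rw [Matrix.sub_mulVec, Matrix.one_mulVec, sub_eq_zero] at hv
      exact hv.symm
    have hQk : ∀ k, (Q ^ k) *ᵥ v = v := by
      intro k
      induction k with
      | zero => simp
      | succ k ih => rw [pow_succ', ← Matrix.mulVec_mulVec, ih, hQv]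
    rcases isEmpty_or_nonempty ↥Aᶜ with h | h
    · exact hv0 (Subsingleton.elim v 0)
    · obtain ⟨i₀, -, hmax⟩ := Finset.exists_max_image Finset.univ
        (fun i => |v i|) Finset.univ_nonempty
      have hmax' : ∀ i, |v i| ≤ |v i₀| := fun i => hmax i (Finset.mem_univ i)
      have hveq : v i₀ = ∑ j, (Q ^ m) i₀ j * v j := by
        conv_lhs => rw [← hQk m]
        rw [Matrix.mulVec, dotProduct]
      have hb : |v i₀| ≤ c * |v i₀| := by
        calc |v i₀| = |∑ j, (Q ^ m) i₀ j * v j| := by rw [← hveq]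
          _ ≤ ∑ j, |(Q ^ m) i₀ j * v j| := Finset.abs_sum_le_sum_abs _ _
          _ = ∑ j, (Q ^ m) i₀ j * |v j| := by
              refine Finset.sum_congr rfl fun j _ => ?_
              rw [abs_mul, abs_of_nonneg (pow_nn Q hQ0 m i₀ j)]
          _ ≤ ∑ j, (Q ^ m) i₀ j * |v i₀| :=
              Finset.sum_le_sum fun j _ =>
                mul_le_mul_of_nonneg_left (hmax' j) (pow_nn Q hQ0 m i₀ j)
          _ = (∑ j, (Q ^ m) i₀ j) * |v i₀| := (Finset.sum_mul _ _ _).symm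
          _ ≤ c * |v i₀| :=
              mul_le_mul_of_nonneg_right (hcm i₀) (abs_nonneg _)
      have hM0 : |v i₀| ≤ 0 := by nlinarith [abs_nonneg (v i₀)]
      refine hv0 (funext fun i => ?_)
      have h1 := le_trans (hmax' i) hM0
      have h2 := abs_nonneg (v i)
      have h3 : |v i| = 0 := le_antisymm h1 h2
      simpa [abs_eq_zero] using h3
  have hdet : IsUnit (1 - Q).det := (Matrix.isUnit_iff_isUnit_det _).1 hUnit
  set Nm : Matrix ↥Aᶜ ↥Aᶜ ℝ := (1 - Q)⁻¹ with hNmdef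
  have hNl : Nm * (1 - Q) = 1 := Matrix.nonsing_inv_mul _ hdet
  have hNr : (1 - Q) * Nm = 1 := Matrix.mul_nonsing_inv _ hdet
  have hgeo : ∀ K, Nm = (∑ k ∈ Finset.range K, Q ^ k) + Q ^ K * Nm := by
    intro K
    have h1 : (∑ k ∈ Finset.range K, Q ^ k) * (1 - Q) = 1 - Q ^ K := by
      have h := geom_sum_mul Q K
      have h2 : (∑ k ∈ Finset.range K, Q ^ k) * (1 - Q)
          = -((∑ k ∈ Finset.range K, Q ^ k) * (Q - 1)) := by
        rw [← mul_neg, neg_sub]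
      rw [h2, h, neg_sub]
    have h2 : (∑ k ∈ Finset.range K, Q ^ k) = (1 - Q ^ K) * Nm := by
      calc (∑ k ∈ Finset.range K, Q ^ k)
          = (∑ k ∈ Finset.range K, Q ^ k) * ((1 - Q) * Nm) := by rw [hNr, mul_one]
        _ = ((∑ k ∈ Finset.range K, Q ^ k) * (1 - Q)) * Nm := (mul_assoc _ _ _).symm
        _ = (1 - Q ^ K) * Nm := by rw [h1]
    rw [h2, sub_mul, one_mul, sub_add_cancel]
  have hN0 : ∀ i j, 0 ≤ Nm i j := by
    intro i j
    by_contra hneg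
    push_neg at hneg
    set Cj : ℝ := ∑ b, |Nm b j| with hCj
    have hCj0 : 0 ≤ Cj := Finset.sum_nonneg fun b _ => abs_nonneg _
    have hbound : ∀ k, -(c ^ k * Cj) ≤ Nm i j := by
      intro k
      have hentry : Nm i j = (∑ l ∈ Finset.range (m * k), Q ^ l) i j
          + (Q ^ (m * k) * Nm) i j := by
        conv_lhs => rw [hgeo (m * k)]
        rw [Matrix.add_apply]
      have hS0 : 0 ≤ (∑ l ∈ Finset.range (m * k), Q ^ l) i j := by
        rw [Matrix.sum_apply]
        exact Finset.sum_nonneg fun l _ => pow_nn Q hQ0 l i j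
      have hQK : ∀ b, (Q ^ (m * k)) i b ≤ c ^ k := by
        intro b
        calc (Q ^ (m * k)) i b ≤ ∑ j', (Q ^ (m * k)) i j' :=
              Finset.single_le_sum (fun j' _ => pow_nn Q hQ0 _ i j') (Finset.mem_univ b)
          _ ≤ c ^ k := hck k i
      have htail : -(c ^ k * Cj) ≤ (Q ^ (m * k) * Nm) i j := by
        rw [Matrix.mul_apply]
        have hterm : ∀ b : ↥Aᶜ, -(c ^ k * |Nm b j|) ≤ (Q ^ (m * k)) i b * Nm b j := by
          intro b
          have h1 : -|(Q ^ (m * k)) i b * Nm b j| ≤ (Q ^ (m * k)) i b * Nm b j :=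
            neg_abs_le _
          have h2 : |(Q ^ (m * k)) i b * Nm b j| = (Q ^ (m * k)) i b * |Nm b j| := by
            rw [abs_mul, abs_of_nonneg (pow_nn Q hQ0 _ i b)]
          have h3 : (Q ^ (m * k)) i b * |Nm b j| ≤ c ^ k * |Nm b j| :=
            mul_le_mul_of_nonneg_right (hQK b) (abs_nonneg _)
          linarith [h2 ▸ h1]
        calc -(c ^ k * Cj) = ∑ b, -(c ^ k * |Nm b j|) := by
              rw [hCj, Finset.mul_sum, Finset.sum_neg_distrib]
          _ ≤ ∑ b, (Q ^ (m * k)) i b * Nm b j := Finset.sum_le_sum fun b _ => hterm b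
      linarith [hentry, hS0, htail]
    obtain ⟨k, hk⟩ := exists_pow_lt_of_lt_one
      (div_pos (by linarith : (0:ℝ) < -Nm i j) (by linarith : (0:ℝ) < Cj + 1)) hc1
    have h1 : c ^ k * Cj ≤ c ^ k * (Cj + 1) := by
      have := pow_nonneg hc0 k
      nlinarith
    have h2 : c ^ k * (Cj + 1) < (-Nm i j / (Cj + 1)) * (Cj + 1) :=
      mul_lt_mul_of_pos_right hk (by linarith)
    rw [div_mul_cancel₀ _ (by linarith : Cj + 1 ≠ 0)] at h2
    linarith [hbound k]
  refine ⟨hUnit, ?_, ?_⟩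
  · intro i j
    rw [Matrix.add_apply]
    have h1 : (0:ℝ) ≤ subBlock P A A i j := hP0 _ _
    have h2 : (0:ℝ) ≤ (subBlock P A Aᶜ * Nm * subBlock P Aᶜ A) i j := by
      rw [Matrix.mul_apply]
      refine Finset.sum_nonneg fun b _ => mul_nonneg ?_ (hP0 _ _)
      rw [Matrix.mul_apply]
      exact Finset.sum_nonneg fun b' _ => mul_nonneg (hP0 _ _) (hN0 b' b)
    linarith
  · intro i
    have hsplit : ∀ (f : E → ℝ), ∑ j : ↥A, f j + ∑ j : ↥Aᶜ, f j = ∑ j : E, f j := by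
      intro f
      rw [Finset.sum_set_coe, Finset.sum_set_coe, Set.toFinset_compl]
      exact Finset.sum_add_sum_compl _ _
    have hw : (1 - Q) *ᵥ (fun _ => (1:ℝ)) = fun b : ↥Aᶜ => ∑ j : ↥A, P (b:E) j := by
      funext b
      rw [Matrix.mulVec, dotProduct]
      simp only [Matrix.sub_apply, Matrix.one_apply, mul_one, sub_mul, one_mul]
      rw [Finset.sum_sub_distrib]
      have h1 : ∑ j : ↥Aᶜ, (if b = j then (1:ℝ) else 0) = 1 := by simp
      rw [h1]
      have h2 := hsplit (fun j => P (b:E) j)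
      have hQbj : ∀ j : ↥Aᶜ, Q b j = P (b:E) j := fun j => rfl
      simp_rw [hQbj]
      have h3 := hP1 (b:E)
      linarith
    have hNw : Nm *ᵥ (fun b : ↥Aᶜ => ∑ j : ↥A, P (b:E) j) = fun _ => (1:ℝ) := by
      rw [← hw, Matrix.mulVec_mulVec, hNl, Matrix.one_mulVec]
    have hadd : ∑ j : ↥A, (subBlock P A A +
        subBlock P A Aᶜ * Nm * subBlock P Aᶜ A) i j
        = ∑ j : ↥A, subBlock P A A i j
          + ∑ j : ↥A, (subBlock P A Aᶜ * Nm * subBlock P Aᶜ A) i j := by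
      simp [Matrix.add_apply, Finset.sum_add_distrib]
    rw [hadd]
    have hY1 : subBlock P Aᶜ A *ᵥ (fun _ => (1:ℝ))
        = fun b : ↥Aᶜ => ∑ j : ↥A, P (b:E) j := by
      funext b
      rw [Matrix.mulVec, dotProduct]
      simp [subBlock]
    have h2 : ∑ j : ↥A, (subBlock P A Aᶜ * Nm * subBlock P Aᶜ A) i j
        = ∑ b : ↥Aᶜ, P (i:E) b := by
      have e1 : ∑ j : ↥A, (subBlock P A Aᶜ * Nm * subBlock P Aᶜ A) i j
          = ((subBlock P A Aᶜ * Nm * subBlock P Aᶜ A) *ᵥ (fun _ => (1:ℝ))) i := by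
        rw [Matrix.mulVec, dotProduct]
        simp
      rw [e1, ← Matrix.mulVec_mulVec, ← Matrix.mulVec_mulVec, hY1, hNw]
      rw [Matrix.mulVec, dotProduct]
      simp [subBlock]
    rw [h2]
    have h1 : ∑ j : ↥A, subBlock P A A i j = ∑ j : ↥A, P (i:E) j := rfl
    rw [h1]
    rw [hsplit (fun j => P (i:E) j)]
    exact hP1 (i:E)
end

section
/- Let E be a finite nonempty type, let P be an irreducible stochastic matrix on E, let π be an invariant probability vector of P, and let A ⊆ E be a nonempty subset with complement B. Then I − P_{BB} is invertible, ∑_{j∈A} π(j) > 0, and the row vector π^{(A)} on A defined by π^{(A)}(i) = π(i) / ∑_{j∈A} π(j) is an invariant probability vector of the censored matrix P^{(A)} := P_{AA} + P_{AB} (I − P_{BB})^{-1} P_{BA}: its entries are nonnegative, they sum to 1, and (π^{(A)})^T P^{(A)} = (π^{(A)})^T. -/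
open Matrix BigOperators

lemma splitSum {E : Type*} [Fintype E] (A : Set E) [DecidablePred (· ∈ A)] (f : E → ℝ) :
    ∑ i, f i = (∑ i : ↥A, f ↑i) + ∑ i : ↥Aᶜ, f ↑i := by
  rw [← Fintype.sum_subtype_add_sum_subtype (· ∈ A) f]
  rfl

lemma powNonneg {E : Type*} [Fintype E] [DecidableEq E] (P : Matrix E E ℝ) (hP0 : ∀ i j, 0 ≤ P i j) :
    ∀ n i j, 0 ≤ (P ^ n) i j := by
  intro n
  induction n with
  | zero =>
    intro i j
    by_cases h : i = j <;> simp [Matrix.one_apply, h]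
  | succ n ih =>
    intro i j
    rw [pow_succ, Matrix.mul_apply]
    exact Finset.sum_nonneg fun k _ => mul_nonneg (ih i k) (hP0 k j)

lemma oneSubUnit {E : Type*} [Fintype E] [DecidableEq E] (P : Matrix E E ℝ)
    (hP0 : ∀ i j, 0 ≤ P i j) (hP1 : ∀ i, ∑ j, P i j = 1)
    (hirr : ∀ i j, ∃ n, 1 ≤ n ∧ 0 < (P ^ n) i j)
    (A : Set E) [DecidablePred (· ∈ A)] (hA : A.Nonempty) :
    IsUnit (1 - subBlock P Aᶜ Aᶜ) := by
  rw [Matrix.isUnit_iff_isUnit_det, isUnit_iff_ne_zero]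
  intro hdet
  obtain ⟨v, hv0, hv⟩ := Matrix.exists_mulVec_eq_zero_iff.mpr hdet
  rw [Matrix.sub_mulVec, Matrix.one_mulVec, sub_eq_zero] at hv
  have hvQ : ∀ i : ↥Aᶜ, v i = ∑ k : ↥Aᶜ, P ↑i ↑k * v k := fun i => congrFun hv i
  obtain ⟨i₁, hi₁⟩ := Function.ne_iff.mp hv0
  obtain ⟨i₀, -, hmax⟩ := Finset.exists_max_image Finset.univ (fun i => |v i|)
    ⟨i₁, Finset.mem_univ i₁⟩
  set M := |v i₀| with hM
  have hMpos : 0 < M := lt_of_lt_of_le (abs_pos.mpr hi₁) (hmax i₁ (Finset.mem_univ i₁))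
  -- one step
  have step : ∀ i : ↥Aᶜ, |v i| = M → ∀ j : E, 0 < P ↑i j →
      ∃ hj : j ∈ Aᶜ, |v ⟨j, hj⟩| = M := by
    intro i hi j hj
    have h1 : M ≤ ∑ k : ↥Aᶜ, P ↑i ↑k * |v k| := by
      calc M = |v i| := hi.symm
        _ = |∑ k : ↥Aᶜ, P ↑i ↑k * v k| := by rw [← hvQ i]
        _ ≤ ∑ k : ↥Aᶜ, |P ↑i ↑k * v k| := Finset.abs_sum_le_sum_abs _ _
        _ = ∑ k : ↥Aᶜ, P ↑i ↑k * |v k| := by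
            apply Finset.sum_congr rfl
            intro k _
            rw [abs_mul, abs_of_nonneg (hP0 _ _)]
    have h2 : ∑ k : ↥Aᶜ, P ↑i ↑k * |v k| ≤ ∑ k : ↥Aᶜ, P ↑i ↑k * M :=
      Finset.sum_le_sum fun k _ =>
        mul_le_mul_of_nonneg_left (hmax k (Finset.mem_univ k)) (hP0 _ _)
    have hsplit : (∑ k : ↥A, P ↑i ↑k) + ∑ k : ↥Aᶜ, P ↑i ↑k = 1 := by
      rw [← splitSum A (fun k => P ↑i k)]; exact hP1 _
    have hApos : 0 ≤ ∑ k : ↥A, P ↑i ↑k :=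
      Finset.sum_nonneg fun k _ => hP0 _ _
    have h3 : ∑ k : ↥Aᶜ, P ↑i ↑k ≤ 1 := by linarith
    have h4 : ∑ k : ↥Aᶜ, P ↑i ↑k * M = (∑ k : ↥Aᶜ, P ↑i ↑k) * M := by
      rw [Finset.sum_mul]
    have h5 : (∑ k : ↥Aᶜ, P ↑i ↑k) * M ≤ M := by nlinarith
    have heq2 : ∑ k : ↥Aᶜ, P ↑i ↑k = 1 := by
      have hMM : (∑ k : ↥Aᶜ, P ↑i ↑k) * M = 1 * M := by rw [one_mul]; linarith
      exact mul_right_cancel₀ (ne_of_gt hMpos) hMM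
    have h6 : ∑ k : ↥Aᶜ, P ↑i ↑k * M = M := by rw [h4, heq2, one_mul]
    have heq1 : ∑ k : ↥Aᶜ, P ↑i ↑k * |v k| = ∑ k : ↥Aᶜ, P ↑i ↑k * M := by linarith
    have hterm : ∀ k : ↥Aᶜ, 0 < P ↑i ↑k → |v k| = M := by
      have hz : ∑ k : ↥Aᶜ, P ↑i ↑k * (M - |v k|) = 0 := by
        have : ∑ k : ↥Aᶜ, P ↑i ↑k * (M - |v k|)
            = (∑ k : ↥Aᶜ, P ↑i ↑k * M) - ∑ k : ↥Aᶜ, P ↑i ↑k * |v k| := by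
          rw [← Finset.sum_sub_distrib]
          apply Finset.sum_congr rfl
          intro k _; ring
        rw [this, heq1, sub_self]
      intro k hk
      have hall := (Finset.sum_eq_zero_iff_of_nonneg (fun k _ =>
        mul_nonneg (hP0 _ _) (sub_nonneg.mpr (hmax k (Finset.mem_univ k))))).mp hz
      have := hall k (Finset.mem_univ k)
      rcases mul_eq_zero.mp this with h | h
      · exact absurd h (ne_of_gt hk)
      · linarith [sub_eq_zero.mp h]
    have hSA : ∑ k : ↥A, P ↑i ↑k = 0 := by linarith
    have hjA : j ∈ Aᶜ := by
      intro hjmem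
      have hall := (Finset.sum_eq_zero_iff_of_nonneg (fun (k : ↥A) _ => hP0 (↑i) (↑k : E))).mp hSA
      have := hall ⟨j, hjmem⟩ (Finset.mem_univ _)
      simp only at this
      rw [this] at hj
      exact lt_irrefl 0 hj
    exact ⟨hjA, hterm ⟨j, hjA⟩ hj⟩
  -- multi step
  have multi : ∀ n, ∀ i : ↥Aᶜ, |v i| = M → ∀ j : E, 0 < (P ^ (n + 1)) ↑i j →
      ∃ hj : j ∈ Aᶜ, |v ⟨j, hj⟩| = M := by
    intro n
    induction n with
    | zero => simpa [pow_one] using step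
    | succ n ih =>
      intro i hi j hj
      rw [pow_succ, Matrix.mul_apply] at hj
      have hex : ∃ k, 0 < (P ^ (n + 1)) ↑i k * P k j := by
        by_contra h
        push_neg at h
        have : ∑ k, (P ^ (n + 1)) (↑i) k * P k j ≤ 0 :=
          Finset.sum_nonpos fun k _ => h k
        linarith
      obtain ⟨k, hk⟩ := hex
      have hk1 : 0 < (P ^ (n + 1)) ↑i k :=
        lt_of_le_of_ne (powNonneg P hP0 _ _ _) (by
          intro h; rw [← h, zero_mul] at hk; exact lt_irrefl 0 hk)
      have hk2 : 0 < P k j :=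
        lt_of_le_of_ne (hP0 _ _) (by
          intro h; rw [← h, mul_zero] at hk; exact lt_irrefl 0 hk)
      obtain ⟨hkC, hkS⟩ := ih i hi k hk1
      exact step ⟨k, hkC⟩ hkS j hk2
  obtain ⟨a, ha⟩ := hA
  obtain ⟨n, hn1, hn⟩ := hirr ↑i₀ a
  obtain ⟨m, rfl⟩ : ∃ m, n = m + 1 := ⟨n - 1, (Nat.succ_pred_eq_of_pos hn1).symm⟩
  obtain ⟨haC, -⟩ := multi m i₀ rfl a hn
  exact haC ha
lemma piPowInv {E : Type*} [Fintype E] [DecidableEq E] (P : Matrix E E ℝ) (π : E → ℝ)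
    (hπP : π ᵥ* P = π) : ∀ n, π ᵥ* (P ^ n) = π := by
  intro n
  induction n with
  | zero => simp
  | succ n ih => rw [pow_succ, ← Matrix.vecMul_vecMul, ih, hπP]

lemma piPos {E : Type*} [Fintype E] [Nonempty E] [DecidableEq E] (P : Matrix E E ℝ)
    (hP0 : ∀ i j, 0 ≤ P i j)
    (hirr : ∀ i j, ∃ n, 1 ≤ n ∧ 0 < (P ^ n) i j)
    (π : E → ℝ) (hπ0 : ∀ i, 0 ≤ π i) (hπ1 : ∑ i, π i = 1)
    (hπP : π ᵥ* P = π) : ∀ j, 0 < π j := by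
  have hex : ∃ i, 0 < π i := by
    by_contra h
    push_neg at h
    have : (∑ i, π i) ≤ 0 := Finset.sum_nonpos fun i _ => h i
    linarith
  obtain ⟨i, hi⟩ := hex
  intro j
  obtain ⟨n, -, hn⟩ := hirr i j
  have h1 : (π ᵥ* (P ^ n)) j = π j := congrFun (piPowInv P π hπP n) j
  have h2 : (π ᵥ* (P ^ n)) j = ∑ k, π k * (P ^ n) k j := rfl
  rw [← h1, h2]
  apply Finset.sum_pos' (fun k _ => mul_nonneg (hπ0 k) (powNonneg P hP0 n k j))
  exact ⟨i, Finset.mem_univ i, mul_pos hi hn⟩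

theorem stmt8 {E : Type*} [Fintype E] [Nonempty E] [DecidableEq E]
    (P : Matrix E E ℝ)
    (hP0 : ∀ i j, 0 ≤ P i j) (hP1 : ∀ i, ∑ j, P i j = 1)
    (hirr : ∀ i j, ∃ n, 1 ≤ n ∧ 0 < (P ^ n) i j)
    (π : E → ℝ) (hπ0 : ∀ i, 0 ≤ π i) (hπ1 : ∑ i, π i = 1)
    (hπP : π ᵥ* P = π)
    (A : Set E) [DecidablePred (· ∈ A)] (hA : A.Nonempty) :
    IsUnit (1 - subBlock P Aᶜ Aᶜ) ∧
    0 < ∑ j : ↥A, π j ∧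
    (∀ i : ↥A, 0 ≤ π i / ∑ j : ↥A, π j) ∧
    (∑ i : ↥A, π i / ∑ j : ↥A, π j) = 1 ∧
    (fun i : ↥A => π i / ∑ j : ↥A, π j) ᵥ*
        (subBlock P A A + subBlock P A Aᶜ * (1 - subBlock P Aᶜ Aᶜ)⁻¹ * subBlock P Aᶜ A)
      = fun i : ↥A => π i / ∑ j : ↥A, π j := by
  have hπpos : ∀ j, 0 < π j := piPos P hP0 hirr π hπ0 hπ1 hπP
  have hU : IsUnit (1 - subBlock P Aᶜ Aᶜ) := oneSubUnit P hP0 hP1 hirr A hA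
  have := hA.to_subtype
  have hc : 0 < ∑ j : ↥A, π ↑j :=
    Finset.sum_pos (fun j _ => hπpos ↑j) Finset.univ_nonempty
  set c : ℝ := ∑ j : ↥A, π ↑j with hcdef
  refine ⟨hU, hc, fun i => div_nonneg (hπ0 ↑i) hc.le, ?_, ?_⟩
  · rw [← Finset.sum_div, div_self (ne_of_gt hc)]
  -- invariance
  set πA : ↥A → ℝ := fun i => π ↑i with hπA
  set πB : ↥Aᶜ → ℝ := fun i => π ↑i with hπB
  have key : ∀ (T : Set E) (_ : DecidablePred (· ∈ T)) (j : ↥T),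
      (πA ᵥ* subBlock P A T) j + (πB ᵥ* subBlock P Aᶜ T) j = π ↑j := by
    intro T _ j
    have h := congrFun hπP ↑j
    have h2 : ∑ i, π i * P i ↑j = π ↑j := h
    rw [splitSum A (fun i => π i * P i ↑j)] at h2
    exact h2
  have eqA : πA ᵥ* subBlock P A A + πB ᵥ* subBlock P Aᶜ A = πA := by
    funext j
    exact key A inferInstance j
  have eqB : πA ᵥ* subBlock P A Aᶜ + πB ᵥ* subBlock P Aᶜ Aᶜ = πB := by
    funext j
    exact key Aᶜ inferInstance j
  have hdet : IsUnit (1 - subBlock P Aᶜ Aᶜ).det :=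
    (Matrix.isUnit_iff_isUnit_det _).mp hU
  have hinv : (1 - subBlock P Aᶜ Aᶜ) * (1 - subBlock P Aᶜ Aᶜ)⁻¹ = 1 :=
    Matrix.mul_nonsing_inv _ hdet
  have hABinv : (πA ᵥ* subBlock P A Aᶜ) ᵥ* (1 - subBlock P Aᶜ Aᶜ)⁻¹ = πB := by
    have h : πA ᵥ* subBlock P A Aᶜ = πB ᵥ* (1 - subBlock P Aᶜ Aᶜ) := by
      rw [Matrix.vecMul_sub, Matrix.vecMul_one]
      exact eq_sub_of_add_eq eqB
    rw [h, Matrix.vecMul_vecMul, hinv, Matrix.vecMul_one]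
  have keyinv : πA ᵥ* (subBlock P A A +
      subBlock P A Aᶜ * (1 - subBlock P Aᶜ Aᶜ)⁻¹ * subBlock P Aᶜ A) = πA := by
    rw [Matrix.vecMul_add, ← Matrix.vecMul_vecMul, ← Matrix.vecMul_vecMul, hABinv, eqA]
  have hfun : (fun i : ↥A => π ↑i / c) = c⁻¹ • πA := by
    funext i
    simp [div_eq_inv_mul, hπA]
  rw [hfun, Matrix.smul_vecMul, keyinv]
end

section
/- Let E be a finite nonempty type, let P be a stochastic matrix on E, let π be an invariant probability vector of P, and let A ⊆ E be a subset with complement B such that I − P_{BB} is invertible. Then π_B^T = π_A^T P_{AB} (I − P_{BB})^{-1}, where π_A and π_B denote the restrictions of π to A and B. -/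
open Matrix BigOperators

theorem stmt9 {E : Type*} [Fintype E] [Nonempty E] [DecidableEq E]
    (P : Matrix E E ℝ)
    (hP0 : ∀ i j, 0 ≤ P i j) (hP1 : ∀ i, ∑ j, P i j = 1)
    (π : E → ℝ) (hπ0 : ∀ i, 0 ≤ π i) (hπ1 : ∑ i, π i = 1)
    (hπP : π ᵥ* P = π)
    (A : Set E) [DecidablePred (· ∈ A)]
    (hBB : IsUnit (1 - subBlock P Aᶜ Aᶜ)) :
    (fun j : ↥(Aᶜ) => π j) =
      (fun i : ↥A => π i) ᵥ* (subBlock P A Aᶜ * (1 - subBlock P Aᶜ Aᶜ)⁻¹) := by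
  have key : (fun j : ↥(Aᶜ) => π j) ᵥ* (1 - subBlock P Aᶜ Aᶜ) =
      (fun i : ↥A => π i) ᵥ* subBlock P A Aᶜ := by
    funext j
    have h := congrFun hπP j.1
    simp only [vecMul, dotProduct] at h ⊢
    have hsplit : ∑ i, π i * P i j.1 =
        ∑ i : ↥A, π i.1 * P i.1 j.1 + ∑ i : ↥(Aᶜ), π i.1 * P i.1 j.1 := by
      rw [← Fintype.sum_subtype_add_sum_subtype (· ∈ A) (fun i => π i * P i j.1)]
      rfl
    rw [hsplit] at h
    simp only [Matrix.sub_apply, Matrix.one_apply, subBlock, Matrix.of_apply, mul_sub,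
      Finset.sum_sub_distrib, mul_ite, mul_one, mul_zero]
    rw [Finset.sum_ite_eq' Finset.univ j (fun i => π i.1)]
    simp only [Finset.mem_univ, if_true]
    linarith
  have hdet : IsUnit (1 - subBlock P Aᶜ Aᶜ).det :=
    (Matrix.isUnit_iff_isUnit_det _).mp hBB
  calc (fun j : ↥(Aᶜ) => π j)
      = (fun j : ↥(Aᶜ) => π j) ᵥ* ((1 - subBlock P Aᶜ Aᶜ) * (1 - subBlock P Aᶜ Aᶜ)⁻¹) := by
        rw [Matrix.mul_nonsing_inv _ hdet, Matrix.vecMul_one]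
    _ = ((fun j : ↥(Aᶜ) => π j) ᵥ* (1 - subBlock P Aᶜ Aᶜ)) ᵥ* (1 - subBlock P Aᶜ Aᶜ)⁻¹ := by
        rw [Matrix.vecMul_vecMul]
    _ = (fun i : ↥A => π i) ᵥ* (subBlock P A Aᶜ * (1 - subBlock P Aᶜ Aᶜ)⁻¹) := by
        rw [key, Matrix.vecMul_vecMul]
end

section
/- Let E be a finite nonempty type, let P be a stochastic matrix on E, let π be an invariant probability vector of P, and let A ⊆ E be a subset with complement B such that I − P_{BB} is invertible. Then π_A^T (e + P_{AB} (I − P_{BB})^{-1} e) = 1, where π_A denotes the restriction of π to A and e denotes the all-ones column vector of the appropriate dimension. -/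
open Matrix BigOperators

theorem stmt10 {E : Type*} [Fintype E] [Nonempty E] [DecidableEq E]
    (P : Matrix E E ℝ)
    (hP0 : ∀ i j, 0 ≤ P i j) (hP1 : ∀ i, ∑ j, P i j = 1)
    (π : E → ℝ) (hπ0 : ∀ i, 0 ≤ π i) (hπ1 : ∑ i, π i = 1)
    (hπP : π ᵥ* P = π)
    (A : Set E) [DecidablePred (· ∈ A)]
    (hBB : IsUnit (1 - subBlock P Aᶜ Aᶜ)) :
    (fun i : ↥A => π i) ⬝ᵥ
      ((fun _ : ↥A => (1 : ℝ)) +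
        (subBlock P A Aᶜ * (1 - subBlock P Aᶜ Aᶜ)⁻¹) *ᵥ (fun _ : ↥(Aᶜ) => (1 : ℝ))) = 1 := by
  set Q : Matrix ↥(Aᶜ) ↥(Aᶜ) ℝ := 1 - subBlock P Aᶜ Aᶜ with hQ
  set πA : ↥A → ℝ := fun i => π i
  set πB : ↥(Aᶜ) → ℝ := fun i => π i
  -- key: πA ᵥ* subBlock P A Aᶜ = πB ᵥ* Q
  have key : πA ᵥ* subBlock P A Aᶜ = πB ᵥ* Q := by
    funext j
    have h := congrFun hπP (j : E)
    have hsplit := Fintype.sum_subtype_add_sum_subtype (· ∈ A)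
        (fun i => π i * P i (j : E))
    simp only [vecMul, dotProduct] at h ⊢
    have hB : ∑ i : {x // ¬ x ∈ A}, π i * P i (j : E)
        = ∑ i : ↥(Aᶜ), π i * P i (j : E) := rfl
    simp only [hQ, Matrix.sub_apply, Matrix.one_apply, subBlock, Matrix.of_apply,
      mul_sub, mul_ite, mul_one, mul_zero]
    rw [Finset.sum_sub_distrib, Finset.sum_ite_eq' Finset.univ j (fun i => πB i)]
    simp only [Finset.mem_univ, if_true]
    have : (∑ i : ↥A, πA i * P i (j:E)) + ∑ i : ↥(Aᶜ), πB i * P i (j:E) = π j := by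
      rw [← h]; rw [← hsplit]; rfl
    linarith [this]
  have hdet : IsUnit Q.det := (Matrix.isUnit_iff_isUnit_det Q).mp hBB
  have hQinv : Q * Q⁻¹ = 1 := Matrix.mul_nonsing_inv Q hdet
  have key2 : πA ᵥ* (subBlock P A Aᶜ * Q⁻¹) = πB := by
    rw [← Matrix.vecMul_vecMul, key, Matrix.vecMul_vecMul, hQinv, Matrix.vecMul_one]
  rw [dotProduct_add, dotProduct_mulVec, key2]
  have h1 : πA ⬝ᵥ (fun _ : ↥A => (1:ℝ)) = ∑ i : ↥A, π i := by
    simp [dotProduct, πA]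
  have h2 : πB ⬝ᵥ (fun _ : ↥(Aᶜ) => (1:ℝ)) = ∑ i : ↥(Aᶜ), π i := by
    simp [dotProduct, πB]
  rw [h1, h2]
  have := Fintype.sum_subtype_add_sum_subtype (· ∈ A) π
  rw [hπ1] at this
  rw [← this]; rfl
end

section
/- Let E be a finite nonempty type, let P be a stochastic matrix on E, let π be an invariant probability vector of P, and let A ⊆ E be a subset with complement B such that I − P_{BB} is invertible; write Ĥ := (I − P_{BB})^{-1} and P^{(A)} := P_{AA} + P_{AB} Ĥ P_{BA}. Let X be an E×E real matrix whose row block X_A indexed by A satisfies (I − P^{(A)}) X_A = [I, P_{AB} Ĥ] − (e + P_{AB} Ĥ e) π^T and whose row block X_B indexed by B satisfies X_B = Ĥ P_{BA} X_A + [O, Ĥ] − Ĥ e π^T. Then X satisfies Poisson's equation (I − P) X = I − e π^T. -/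
open Matrix BigOperators

/-- The row block of an `E × E` matrix `X` with rows indexed by `S`. -/
def rowBlock {E : Type*} (X : Matrix E E ℝ) (S : Set E) : Matrix ↥S E ℝ :=
  Matrix.of fun i j => X i j

/-- The `ι × E` matrix whose columns indexed by `A` form `M` and whose columns indexed
by the complement of `A` form `N`. -/
def blockRow {E ι : Type*} (A : Set E) [DecidablePred (· ∈ A)]
    (M : Matrix ι ↥A ℝ) (N : Matrix ι ↥(Aᶜ) ℝ) : Matrix ι E ℝ :=
  Matrix.of fun i j => if h : j ∈ A then M i ⟨j, h⟩ else N i ⟨j, h⟩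

section helpers

variable {E ι κ : Type*} [Fintype E] (A : Set E) [DecidablePred (· ∈ A)]

lemma sum_split (f : E → ℝ) :
    ∑ k, f k = (∑ a : ↥A, f a) + ∑ b : ↥(Aᶜ), f b := by
  rw [← Equiv.sum_comp (Equiv.sumCompl (· ∈ A)) f, Fintype.sum_sum_type]
  rfl

lemma rowBlock_mul (S : Set E) (P X : Matrix E E ℝ) :
    rowBlock (P * X) S = subBlock P S A * rowBlock X A + subBlock P S Aᶜ * rowBlock X Aᶜ := by
  ext i j
  show (∑ k, P (i : E) k * X k j) = _
  rw [sum_split A (fun k => P (i : E) k * X k j)]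
  rfl

lemma mul_blockRow [Fintype ι] (Q : Matrix κ ι ℝ) (M : Matrix ι ↥A ℝ) (N : Matrix ι ↥(Aᶜ) ℝ) :
    Q * blockRow A M N = blockRow A (Q * M) (Q * N) := by
  ext i j
  by_cases h : j ∈ A <;> simp [blockRow, Matrix.mul_apply, h]

lemma mul_vecMulVec' [Fintype ι] (Q : Matrix κ ι ℝ) (v : ι → ℝ) (w : E → ℝ) :
    Q * Matrix.vecMulVec v w = Matrix.vecMulVec (Q *ᵥ v) w := by
  ext i j
  simp [Matrix.mul_apply, Matrix.vecMulVec_apply, Matrix.mulVec, dotProduct,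
    Finset.sum_mul, mul_assoc]

lemma blockRow_sub (M M' : Matrix ι ↥A ℝ) (N N' : Matrix ι ↥(Aᶜ) ℝ) :
    blockRow A M N - blockRow A M' N' = blockRow A (M - M') (N - N') := by
  ext i j
  by_cases h : j ∈ A <;> simp [blockRow, h]

lemma vecMulVec_add_left (u v : ι → ℝ) (w : E → ℝ) :
    Matrix.vecMulVec (u + v) w = Matrix.vecMulVec u w + Matrix.vecMulVec v w := by
  ext i j
  simp [Matrix.vecMulVec_apply, add_mul]

lemma rowBlock_sub (S : Set E) (X Y : Matrix E E ℝ) :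
    rowBlock (X - Y) S = rowBlock X S - rowBlock Y S := rfl

lemma rowBlock_one_A [DecidableEq E] :
    rowBlock (1 : Matrix E E ℝ) A = blockRow A 1 (0 : Matrix ↥A ↥(Aᶜ) ℝ) := by
  ext i j
  by_cases h : j ∈ A
  · by_cases hij : (i : E) = j
    · simp [rowBlock, blockRow, h, hij, Matrix.one_apply, Subtype.ext_iff]
    · simp [rowBlock, blockRow, h, hij, Matrix.one_apply, Subtype.ext_iff]
  · have : (i : E) ≠ j := fun hh => h (hh ▸ i.2)
    simp [rowBlock, blockRow, h, this, Matrix.one_apply]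

lemma rowBlock_one_B [DecidableEq E] :
    rowBlock (1 : Matrix E E ℝ) Aᶜ = blockRow A (0 : Matrix ↥(Aᶜ) ↥A ℝ) 1 := by
  ext i j
  by_cases h : j ∈ A
  · have : (i : E) ≠ j := fun hh => i.2 (hh ▸ h)
    simp [rowBlock, blockRow, h, this, Matrix.one_apply]
  · by_cases hij : (i : E) = j
    · simp [rowBlock, blockRow, h, hij, Matrix.one_apply, Subtype.ext_iff]
    · simp [rowBlock, blockRow, h, hij, Matrix.one_apply, Subtype.ext_iff]

lemma rowBlock_vecMulVec (S : Set E) (v : E → ℝ) (w : E → ℝ) :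
    rowBlock (Matrix.vecMulVec v w) S = Matrix.vecMulVec (fun i : ↥S => v i) w := rfl

lemma eq_of_rowBlock {X Y : Matrix E E ℝ}
    (hA : rowBlock X A = rowBlock Y A) (hB : rowBlock X Aᶜ = rowBlock Y Aᶜ) : X = Y := by
  ext i j
  by_cases h : i ∈ A
  · exact congrFun (congrFun hA ⟨i, h⟩) j
  · exact congrFun (congrFun hB ⟨i, h⟩) j

end helpers

theorem stmt12 {E : Type*} [Fintype E] [Nonempty E] [DecidableEq E]
    (P : Matrix E E ℝ)
    (hP0 : ∀ i j, 0 ≤ P i j) (hP1 : ∀ i, ∑ j, P i j = 1)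
    (π : E → ℝ) (hπ0 : ∀ i, 0 ≤ π i) (hπ1 : ∑ i, π i = 1)
    (hπP : π ᵥ* P = π)
    (A : Set E) [DecidablePred (· ∈ A)]
    (hBB : IsUnit (1 - subBlock P Aᶜ Aᶜ))
    (X : Matrix E E ℝ)
    (hXA : (1 - (subBlock P A A +
          subBlock P A Aᶜ * (1 - subBlock P Aᶜ Aᶜ)⁻¹ * subBlock P Aᶜ A)) * rowBlock X A
        = blockRow A (1 : Matrix ↥A ↥A ℝ) (subBlock P A Aᶜ * (1 - subBlock P Aᶜ Aᶜ)⁻¹)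
          - Matrix.vecMulVec
              ((fun _ : ↥A => (1 : ℝ)) +
                (subBlock P A Aᶜ * (1 - subBlock P Aᶜ Aᶜ)⁻¹) *ᵥ (fun _ : ↥(Aᶜ) => (1 : ℝ)))
              π)
    (hXB : rowBlock X Aᶜ
        = (1 - subBlock P Aᶜ Aᶜ)⁻¹ * subBlock P Aᶜ A * rowBlock X A
          + blockRow A (0 : Matrix ↥(Aᶜ) ↥A ℝ) ((1 - subBlock P Aᶜ Aᶜ)⁻¹)
          - Matrix.vecMulVec ((1 - subBlock P Aᶜ Aᶜ)⁻¹ *ᵥ (fun _ : ↥(Aᶜ) => (1 : ℝ))) π) :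
    (1 - P) * X = 1 - Matrix.vecMulVec (fun _ => (1 : ℝ)) π := by
  set PAA := subBlock P A A with hPAA
  set PAB := subBlock P A Aᶜ with hPAB
  set PBA := subBlock P Aᶜ A with hPBA
  set PBB := subBlock P Aᶜ Aᶜ with hPBB
  set H := (1 - PBB)⁻¹ with hHdef
  set XA := rowBlock X A with hXAdef
  set XB := rowBlock X Aᶜ with hXBdef
  set eB := (fun _ : ↥(Aᶜ) => (1 : ℝ)) with heB
  have hH : (1 - PBB) * H = 1 :=
    Matrix.mul_nonsing_inv _ ((Matrix.isUnit_iff_isUnit_det _).mp hBB)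
  rw [sub_mul, one_mul]
  apply eq_of_rowBlock A
  · rw [rowBlock_sub, rowBlock_mul A A P X, rowBlock_sub, rowBlock_one_A,
      rowBlock_vecMulVec]
    rw [← hXAdef, ← hXBdef, ← hPAA, ← hPAB]
    calc XA - (PAA * XA + PAB * XB)
        = (1 - (PAA + PAB * H * PBA)) * XA
            - PAB * blockRow A (0 : Matrix ↥(Aᶜ) ↥A ℝ) H
            + PAB * Matrix.vecMulVec (H *ᵥ eB) π := by
          rw [hXB]
          simp only [Matrix.mul_add, Matrix.mul_sub, Matrix.sub_mul, Matrix.add_mul,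
            Matrix.one_mul, Matrix.mul_assoc]
          abel
      _ = blockRow A (1 : Matrix ↥A ↥A ℝ) (PAB * H)
            - (Matrix.vecMulVec (fun _ : ↥A => (1 : ℝ)) π
                + Matrix.vecMulVec ((PAB * H) *ᵥ eB) π)
            - blockRow A (PAB * (0 : Matrix ↥(Aᶜ) ↥A ℝ)) (PAB * H)
            + Matrix.vecMulVec (PAB *ᵥ (H *ᵥ eB)) π := by
          rw [hXA, mul_blockRow, mul_vecMulVec', vecMulVec_add_left]
      _ = blockRow A (1 : Matrix ↥A ↥A ℝ) (PAB * H)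
            - blockRow A (PAB * (0 : Matrix ↥(Aᶜ) ↥A ℝ)) (PAB * H)
            - Matrix.vecMulVec (fun _ : ↥A => (1 : ℝ)) π := by
          rw [Matrix.mulVec_mulVec]
          abel
      _ = blockRow A (1 : Matrix ↥A ↥A ℝ) (0 : Matrix ↥A ↥(Aᶜ) ℝ)
            - Matrix.vecMulVec (fun _ : ↥A => (1 : ℝ)) π := by
          rw [blockRow_sub, Matrix.mul_zero, sub_zero, sub_self]
  · rw [rowBlock_sub, rowBlock_mul A Aᶜ P X, rowBlock_sub, rowBlock_one_B,
      rowBlock_vecMulVec]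
    rw [← hXAdef, ← hXBdef, ← hPBA, ← hPBB]
    calc XB - (PBA * XA + PBB * XB)
        = (1 - PBB) * XB - PBA * XA := by
          simp only [Matrix.sub_mul, Matrix.one_mul]
          abel
      _ = ((1 - PBB) * H) * (PBA * XA)
            + blockRow A ((1 - PBB) * (0 : Matrix ↥(Aᶜ) ↥A ℝ)) (((1 - PBB) * H))
            - Matrix.vecMulVec ((1 - PBB) *ᵥ (H *ᵥ eB)) π - PBA * XA := by
          rw [hXB, Matrix.mul_sub, Matrix.mul_add, mul_blockRow, mul_vecMulVec',
            Matrix.mul_assoc, ← Matrix.mul_assoc (1 - PBB) H (PBA * XA)]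
      _ = blockRow A (0 : Matrix ↥(Aᶜ) ↥A ℝ) (1 : Matrix ↥(Aᶜ) ↥(Aᶜ) ℝ)
            - Matrix.vecMulVec (fun _ : ↥(Aᶜ) => (1 : ℝ)) π := by
          rw [Matrix.mulVec_mulVec, hH, Matrix.one_mul, Matrix.mul_zero, Matrix.one_mulVec]
          abel
end

section
/- Let E be a finite nonempty type, let P be a stochastic matrix on E, and let π be an invariant probability vector of P. If the series ∑_{n=0}^∞ (P^n − e π^T) converges in the space of E×E real matrices with sum D (the deviation matrix), then (I − P) D = I − e π^T and π^T D = 0. -/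
open Matrix BigOperators

theorem stmt14 {E : Type*} [Fintype E] [Nonempty E] [DecidableEq E]
    (P : Matrix E E ℝ)
    (hP0 : ∀ i j, 0 ≤ P i j) (hP1 : ∀ i, ∑ j, P i j = 1)
    (π : E → ℝ) (hπ0 : ∀ i, 0 ≤ π i) (hπ1 : ∑ i, π i = 1)
    (hπP : π ᵥ* P = π)
    (D : Matrix E E ℝ)
    (hD : HasSum (fun n : ℕ => P ^ n - Matrix.vecMulVec (fun _ => (1 : ℝ)) π) D) :
    (1 - P) * D = 1 - Matrix.vecMulVec (fun _ => (1 : ℝ)) π ∧ π ᵥ* D = 0 := by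
  set M : Matrix E E ℝ := Matrix.vecMulVec (fun _ => (1 : ℝ)) π with hM
  set f : ℕ → Matrix E E ℝ := fun n => P ^ n - M with hf
  have hPM : P * M = M := by
    ext i j
    simp [hM, Matrix.mul_apply, Matrix.vecMulVec_apply, ← Finset.sum_mul, hP1 i]
  have hπM : π ᵥ* M = π := by
    ext j
    simp [hM, Matrix.vecMul, Matrix.vecMulVec_apply, dotProduct, ← Finset.sum_mul, hπ1]
  constructor
  · -- part 1
    have h1 : HasSum (fun n => f (n + 1)) (D - f 0) := by
      refine (hasSum_nat_add_iff 1).mpr ?_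
      simpa using hD
    have h2 : HasSum (fun n => f n - f (n + 1)) (f 0) := by
      simpa using hD.sub h1
    have hcont : Continuous fun X : Matrix E E ℝ => (1 - P) * X :=
      Continuous.matrix_mul continuous_const continuous_id
    have h3 : HasSum (fun n => (1 - P) * f n) ((1 - P) * D) :=
      hD.map (AddMonoidHom.mulLeft (1 - P)) hcont
    have heq : (fun n => (1 - P) * f n) = fun n => f n - f (n + 1) := by
      funext n
      simp only [hf, sub_mul, one_mul, mul_sub, hPM, pow_succ']
      abel
    rw [heq] at h3
    have := h3.unique h2
    rw [this, hf]
    simp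
  · -- part 2
    have hcont : Continuous fun X : Matrix E E ℝ => π ᵥ* X :=
      Continuous.matrix_vecMul continuous_const continuous_id
    have h3 : HasSum (fun n => π ᵥ* f n) (π ᵥ* D) := by
      refine hD.map (⟨⟨fun X => π ᵥ* X, ?_⟩, ?_⟩ : Matrix E E ℝ →+ (E → ℝ)) hcont
      · simp
      · intro X Y; simp [Matrix.vecMul_add]
    have hπPn : ∀ n : ℕ, π ᵥ* P ^ n = π := by
      intro n
      induction n with
      | zero => simp
      | succ k ih => rw [pow_succ, ← Matrix.vecMul_vecMul, ih, hπP]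
    have heq : (fun n => π ᵥ* f n) = fun _ => (0 : E → ℝ) := by
      funext n
      simp [hf, Matrix.vecMul_sub, hπPn n, hπM]
    rw [heq] at h3
    exact h3.unique hasSum_zero
end

section
/- Let E be a finite nonempty type, let P be an irreducible stochastic matrix on E, and let π be an invariant probability vector of P. Suppose the series ∑_{n=0}^∞ (P^n − e π^T) converges in the space of E×E real matrices with sum D, and let X̃ be any E×E real matrix satisfying (I − P) X̃ = I − e π^T. Then D = (I − e π^T) X̃. -/
open Matrix BigOperators

theorem stmt15 {E : Type*} [Fintype E] [Nonempty E] [DecidableEq E]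
    (P : Matrix E E ℝ)
    (hP0 : ∀ i j, 0 ≤ P i j) (hP1 : ∀ i, ∑ j, P i j = 1)
    (hirr : ∀ i j, ∃ n, 1 ≤ n ∧ 0 < (P ^ n) i j)
    (π : E → ℝ) (hπ0 : ∀ i, 0 ≤ π i) (hπ1 : ∑ i, π i = 1)
    (hπP : π ᵥ* P = π)
    (D : Matrix E E ℝ)
    (hD : HasSum (fun n : ℕ => P ^ n - Matrix.vecMulVec (fun _ => (1 : ℝ)) π) D)
    (X : Matrix E E ℝ)
    (hX : (1 - P) * X = 1 - Matrix.vecMulVec (fun _ => (1 : ℝ)) π) :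
    D = (1 - Matrix.vecMulVec (fun _ => (1 : ℝ)) π) * X := by
  set Q : Matrix E E ℝ := Matrix.vecMulVec (fun _ => (1 : ℝ)) π with hQdef
  -- row sums of P^n are 1
  have hrow : ∀ n : ℕ, ∀ i, ∑ j, (P ^ n) i j = 1 := by
    intro n
    induction n with
    | zero => intro i; simp [Matrix.one_apply]
    | succ n ih =>
      intro i
      have : (P ^ (n + 1)) = P ^ n * P := by rw [pow_succ]
      rw [this]
      simp only [Matrix.mul_apply]
      rw [Finset.sum_comm]
      calc ∑ k, ∑ j, (P ^ n) i k * P k j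
          = ∑ k, (P ^ n) i k * ∑ j, P k j := by
            simp [Finset.mul_sum]
        _ = 1 := by simp [hP1, ih i]
  have hQP : Q * P = Q := by
    ext i j
    simp only [hQdef, Matrix.mul_apply, Matrix.vecMulVec_apply, one_mul]
    have := congrFun hπP j
    simpa [Matrix.vecMul, dotProduct] using this
  have hPnQ : ∀ n : ℕ, P ^ n * Q = Q := by
    intro n
    ext i j
    simp only [Matrix.mul_apply, hQdef, Matrix.vecMulVec_apply, one_mul]
    rw [← Finset.sum_mul, hrow n i, one_mul]
  have hQQ : Q * Q = Q := by
    ext i j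
    simp only [hQdef, Matrix.mul_apply, Matrix.vecMulVec_apply, one_mul]
    rw [← Finset.sum_mul, hπ1, one_mul]
  -- D * Q = 0
  have hmulQcont : Continuous fun M : Matrix E E ℝ => M * Q := by
    exact continuous_id.matrix_mul continuous_const
  have hDQ : D * Q = 0 := by
    have h1 : HasSum (fun n : ℕ => (P ^ n - Q) * Q) (D * Q) :=
      hD.map (AddMonoidHom.mulRight Q) hmulQcont
    have h2 : (fun n : ℕ => (P ^ n - Q) * Q) = fun _ => (0 : Matrix E E ℝ) := by
      funext n
      rw [Matrix.sub_mul, hPnQ n, hQQ, sub_self]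
    rw [h2] at h1
    exact h1.unique hasSum_zero
  -- D * (1 - P) = 1 - Q
  have hPn_tendsto : Filter.Tendsto (fun n : ℕ => P ^ n) Filter.atTop (nhds Q) := by
    have h0 := hD.summable.tendsto_atTop_zero
    have := h0.add_const Q
    simpa using this
  have hD1P : D * (1 - P) = 1 - Q := by
    have hsum := hD.tendsto_sum_nat
    have hmul : Continuous fun M : Matrix E E ℝ => M * (1 - P) :=
      continuous_id.matrix_mul continuous_const
    have h1 : Filter.Tendsto (fun N : ℕ => (∑ n ∈ Finset.range N, (P ^ n - Q)) * (1 - P))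
        Filter.atTop (nhds (D * (1 - P))) := (hmul.tendsto D).comp hsum
    have h2 : ∀ N : ℕ, (∑ n ∈ Finset.range N, (P ^ n - Q)) * (1 - P) = 1 - P ^ N := by
      intro N
      rw [Finset.sum_mul]
      have : ∀ n : ℕ, (P ^ n - Q) * (1 - P) = P ^ n - P ^ (n + 1) := by
        intro n
        rw [Matrix.sub_mul, Matrix.mul_sub, Matrix.mul_sub, Matrix.mul_one, Matrix.mul_one,
          hQP, sub_self, sub_zero, ← pow_succ]
      simp only [this]
      rw [Finset.sum_range_sub']
      simp
    simp only [h2] at h1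
    have h3 : Filter.Tendsto (fun N : ℕ => (1 : Matrix E E ℝ) - P ^ N)
        Filter.atTop (nhds (1 - Q)) := hPn_tendsto.const_sub 1
    exact tendsto_nhds_unique h1 h3
  calc D = D - D * Q := by rw [hDQ, sub_zero]
    _ = D * (1 - Q) := by rw [Matrix.mul_sub, Matrix.mul_one]
    _ = D * ((1 - P) * X) := by rw [hX]
    _ = (D * (1 - P)) * X := by rw [Matrix.mul_assoc]
    _ = (1 - Q) * X := by rw [hD1P]
end

section
/- Let E be a finite nonempty type, let P be an irreducible stochastic matrix on E, let π be an invariant probability vector of P, and fix a state α ∈ E. Then there exists a unique E×E real matrix K satisfying (I − P) K = I − e π^T and K(α, j) = 0 for all j ∈ E; moreover, for any E×E real matrix X̃ satisfying (I − P) X̃ = I − e π^T, one has K(i,j) = X̃(i,j) − X̃(α,j) for all i, j ∈ E. -/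
open Matrix BigOperators

/-- Any eigenvector of an irreducible stochastic matrix for eigenvalue 1 is constant. -/
lemma aux_const_stmt16 {E : Type*} [Fintype E] [Nonempty E] [DecidableEq E]
    (P : Matrix E E ℝ)
    (hP0 : ∀ i j, 0 ≤ P i j) (hP1 : ∀ i, ∑ j, P i j = 1)
    (hirr : ∀ i j, ∃ n, 1 ≤ n ∧ 0 < (P ^ n) i j)
    (v : E → ℝ) (hv : P *ᵥ v = v) : ∀ i j, v i = v j := by
  have hpow0 : ∀ n i j, 0 ≤ (P ^ n) i j := by
    intro n
    induction n with
    | zero => intro i j; simp [Matrix.one_apply]; split <;> norm_num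
    | succ n ih =>
        intro i j
        rw [pow_succ, Matrix.mul_apply]
        exact Finset.sum_nonneg fun k _ => mul_nonneg (ih i k) (hP0 k j)
  have hpow1 : ∀ n i, ∑ j, (P ^ n) i j = 1 := by
    intro n
    induction n with
    | zero => intro i; simp [Matrix.one_apply]
    | succ n ih =>
        intro i
        simp only [pow_succ, Matrix.mul_apply]
        rw [Finset.sum_comm]
        calc ∑ k, ∑ j, (P ^ n) i k * P k j
            = ∑ k, (P ^ n) i k * ∑ j, P k j := by
              simp [Finset.mul_sum]
          _ = 1 := by simp [hP1, ih]
  have hvn : ∀ n, (P ^ n) *ᵥ v = v := by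
    intro n
    induction n with
    | zero => simp
    | succ n ih => rw [pow_succ, ← Matrix.mulVec_mulVec, hv, ih]
  obtain ⟨i0, -, hmax⟩ := Finset.exists_max_image Finset.univ v Finset.univ_nonempty
  have key : ∀ j, v j = v i0 := by
    intro j
    obtain ⟨n, -, hpos⟩ := hirr i0 j
    have hsum : ∑ k, (P ^ n) i0 k * (v i0 - v k) = 0 := by
      have h1 : ∑ k, (P ^ n) i0 k * v k = v i0 := by
        have := congrFun (hvn n) i0
        simpa [Matrix.mulVec, dotProduct] using this
      have h2 : ∑ k, (P ^ n) i0 k * v i0 = v i0 := by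
        rw [← Finset.sum_mul, hpow1, one_mul]
      simp [mul_sub, Finset.sum_sub_distrib, h1, h2]
    have hterm : ∀ k ∈ Finset.univ, (0:ℝ) ≤ (P ^ n) i0 k * (v i0 - v k) := by
      intro k _
      exact mul_nonneg (hpow0 n i0 k) (sub_nonneg.2 (hmax k (Finset.mem_univ k)))
    have := (Finset.sum_eq_zero_iff_of_nonneg hterm).1 hsum j (Finset.mem_univ j)
    have hz : v i0 - v j = 0 := by
      rcases mul_eq_zero.1 this with h | h
      · exact absurd h (ne_of_gt hpos)
      · exact h
    linarith
  intro i j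
  rw [key i, key j]

theorem stmt16 {E : Type*} [Fintype E] [Nonempty E] [DecidableEq E]
    (P : Matrix E E ℝ)
    (hP0 : ∀ i j, 0 ≤ P i j) (hP1 : ∀ i, ∑ j, P i j = 1)
    (hirr : ∀ i j, ∃ n, 1 ≤ n ∧ 0 < (P ^ n) i j)
    (π : E → ℝ) (hπ0 : ∀ i, 0 ≤ π i) (hπ1 : ∑ i, π i = 1)
    (hπP : π ᵥ* P = π)
    (α : E) :
    (∃! K : Matrix E E ℝ,
      (1 - P) * K = 1 - Matrix.vecMulVec (fun _ => (1 : ℝ)) π ∧ ∀ j, K α j = 0) ∧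
    ∀ K : Matrix E E ℝ,
      ((1 - P) * K = 1 - Matrix.vecMulVec (fun _ => (1 : ℝ)) π ∧ ∀ j, K α j = 0) →
      ∀ X : Matrix E E ℝ, (1 - P) * X = 1 - Matrix.vecMulVec (fun _ => (1 : ℝ)) π →
      ∀ i j, K i j = X i j - X α j := by
  set e : E → ℝ := fun _ => 1 with he
  set Q : Matrix E E ℝ := Matrix.vecMulVec e π with hQ
  set M : Matrix E E ℝ := 1 - Q with hM
  -- the comparison statement (used for both uniqueness and the second part)
  have comp : ∀ K : Matrix E E ℝ,
      ((1 - P) * K = M ∧ ∀ j, K α j = 0) →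
      ∀ X : Matrix E E ℝ, (1 - P) * X = M →
      ∀ i j, K i j = X i j - X α j := by
    rintro K ⟨hK, hK0⟩ X hX i j
    set v : E → ℝ := fun i => K i j - X i j with hvdef
    have hPv : P *ᵥ v = v := by
      have h0 : P * (K - X) = K - X := by
        have h0' : (1 - P) * (K - X) = 0 := by rw [mul_sub, hK, hX, sub_self]
        rw [Matrix.sub_mul, Matrix.one_mul, sub_eq_zero] at h0'
        exact h0'.symm
      funext i'
      have := congrFun (congrFun h0 i') j
      simp only [Matrix.mul_apply, Matrix.sub_apply] at this
      simpa [Matrix.mulVec, dotProduct, hvdef] using this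
    have hconst := aux_const_stmt16 P hP0 hP1 hirr v hPv
    have := hconst i α
    simp only [hvdef, hK0 j] at this
    linarith
  -- stochasticity facts
  have hPe : P *ᵥ e = e := by
    funext i
    simp [Matrix.mulVec, dotProduct, he, hP1 i]
  have hπQ : π ᵥ* Q = π := by
    funext j
    simp [Matrix.vecMul, dotProduct, hQ, Matrix.vecMulVec_apply, he, ← Finset.sum_mul, hπ1]
  -- the matrix A = I - P + e πᵀ is invertible
  set A : Matrix E E ℝ := 1 - P + Q with hA
  have hπA : π ᵥ* A = π := by
    rw [hA, Matrix.vecMul_add, Matrix.vecMul_sub, Matrix.vecMul_one, hπP, hπQ]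
    abel
  have hQw : ∀ w : E → ℝ, Q *ᵥ w = fun _ => π ⬝ᵥ w := by
    intro w
    funext i
    simp [hQ, Matrix.mulVec, dotProduct, Matrix.vecMulVec_apply, he]
  have hAinj : Function.Injective A.mulVec := by
    intro x y hxy
    have hw : A *ᵥ (x - y) = 0 := by
      rw [Matrix.mulVec_sub, hxy, sub_self]
    set w := x - y with hwdef
    have hπw : π ⬝ᵥ w = 0 := by
      have : π ⬝ᵥ (A *ᵥ w) = 0 := by rw [hw]; simp
      rwa [Matrix.dotProduct_mulVec, hπA] at this
    have hQw0 : Q *ᵥ w = 0 := by rw [hQw w, hπw]; rfl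
    have hPw : P *ᵥ w = w := by
      have : w - P *ᵥ w + Q *ᵥ w = 0 := by
        rw [← hw, hA]
        rw [Matrix.add_mulVec, Matrix.sub_mulVec, Matrix.one_mulVec]
      rw [hQw0, add_zero, sub_eq_zero] at this
      exact this.symm
    have hconst := aux_const_stmt16 P hP0 hP1 hirr w hPw
    have hwz : w = 0 := by
      obtain ⟨i0⟩ := ‹Nonempty E›
      have h0 : π ⬝ᵥ w = w i0 := by
        simp only [dotProduct]
        calc ∑ i, π i * w i = ∑ i, π i * w i0 := by
              refine Finset.sum_congr rfl fun i _ => ?_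
              rw [hconst i i0]
          _ = w i0 := by rw [← Finset.sum_mul, hπ1, one_mul]
      funext i
      have : w i = w i0 := hconst i i0
      rw [this, ← h0, hπw]; rfl
    exact sub_eq_zero.1 hwz
  have hAunit : IsUnit A := Matrix.mulVec_injective_iff_isUnit.1 hAinj
  have hAdet : IsUnit A.det := (Matrix.isUnit_iff_isUnit_det A).1 hAunit
  -- the particular solution X₀ := A⁻¹ * M
  set X0 : Matrix E E ℝ := A⁻¹ * M with hX0
  have hπAinv : π ᵥ* A⁻¹ = π := by
    calc π ᵥ* A⁻¹ = (π ᵥ* A) ᵥ* A⁻¹ := by rw [hπA]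
      _ = π ᵥ* (A * A⁻¹) := by rw [Matrix.vecMul_vecMul]
      _ = π := by rw [Matrix.mul_nonsing_inv A hAdet, Matrix.vecMul_one]
  have hπM : π ᵥ* M = 0 := by
    rw [hM, Matrix.vecMul_sub, Matrix.vecMul_one, hπQ, sub_self]
  have hQmul : ∀ B : Matrix E E ℝ, Q * B = Matrix.vecMulVec e (π ᵥ* B) := by
    intro B
    ext i j
    simp [hQ, Matrix.mul_apply, Matrix.vecMulVec_apply, he, Matrix.vecMul, dotProduct]
  have hX0sol : (1 - P) * X0 = M := by
    have h1 : (1 - P) = A - Q := by rw [hA]; abel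
    have h2 : π ᵥ* X0 = 0 := by
      rw [hX0, ← Matrix.vecMul_vecMul, hπAinv, hπM]
    calc (1 - P) * X0 = A * X0 - Q * X0 := by rw [h1, Matrix.sub_mul]
      _ = M - Q * X0 := by
          rw [hX0, ← Matrix.mul_assoc, Matrix.mul_nonsing_inv A hAdet, Matrix.one_mul]
      _ = M := by
          rw [hQmul, h2]
          have : Matrix.vecMulVec e (0 : E → ℝ) = 0 := by
            ext i j; simp [Matrix.vecMulVec_apply]
          rw [this, sub_zero]
  -- build K from X₀
  set K0 : Matrix E E ℝ := X0 - Matrix.vecMulVec e (X0 α) with hK0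
  have hK0sol : (1 - P) * K0 = M := by
    have h1 : (1 - P) * Matrix.vecMulVec e (X0 α) = 0 := by
      ext i j
      have h2 : ∑ k, (1 - P) i k = 0 := by
        simp [Matrix.sub_apply, Matrix.one_apply, Finset.sum_sub_distrib, hP1 i]
      simp only [Matrix.mul_apply, Matrix.vecMulVec_apply, he, Matrix.zero_apply]
      calc ∑ k, (1 - P) i k * (1 * X0 α j)
          = (∑ k, (1 - P) i k) * (1 * X0 α j) := by rw [Finset.sum_mul]
        _ = 0 := by rw [h2, zero_mul]
    rw [hK0, mul_sub, hX0sol, h1, sub_zero]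
  have hK0zero : ∀ j, K0 α j = 0 := by
    intro j
    simp [hK0, Matrix.sub_apply, Matrix.vecMulVec_apply, he]
  refine ⟨⟨K0, ⟨hK0sol, hK0zero⟩, ?_⟩, comp⟩
  intro K' hK'
  funext i j
  have h1 := comp K' hK' K0 hK0sol i j
  rw [h1, hK0zero j, sub_zero]
end

section
/- Let E be a finite nonempty type, let P be an irreducible stochastic matrix on E, and let A ⊆ E be a nonempty subset with complement B. Then I − P_{BB} is invertible and the censored matrix P^{(A)} := P_{AA} + P_{AB} (I − P_{BB})^{-1} P_{BA} is an irreducible stochastic matrix on A: for all i, j ∈ A there exists n ≥ 1 with ((P^{(A)})^n)(i,j) > 0. -/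
open Matrix BigOperators Finset

namespace Stmt19Aux

lemma entry_mul_nonneg {m n o : Type*} [Fintype n] (X : Matrix m n ℝ) (Y : Matrix n o ℝ)
    (hX : ∀ i j, 0 ≤ X i j) (hY : ∀ i j, 0 ≤ Y i j) : ∀ i j, 0 ≤ (X * Y) i j := by
  intro i j
  rw [Matrix.mul_apply]
  exact Finset.sum_nonneg fun k _ => mul_nonneg (hX i k) (hY k j)

lemma entry_pow_nonneg {n : Type*} [Fintype n] [DecidableEq n] (X : Matrix n n ℝ)
    (hX : ∀ i j, 0 ≤ X i j) : ∀ m i j, 0 ≤ (X ^ m) i j := by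
  intro m
  induction m with
  | zero => intro i j; simp [Matrix.one_apply]; split <;> norm_num
  | succ k IH =>
      rw [pow_succ]
      exact entry_mul_nonneg _ _ IH hX

lemma single_le_mul_entry {m n o : Type*} [Fintype n] (X : Matrix m n ℝ) (Y : Matrix n o ℝ)
    (hX : ∀ i j, 0 ≤ X i j) (hY : ∀ i j, 0 ≤ Y i j) (i : m) (k : n) (j : o) :
    X i k * Y k j ≤ (X * Y) i j := by
  rw [Matrix.mul_apply]
  exact Finset.single_le_sum (fun b _ => mul_nonneg (hX i b) (hY b j)) (Finset.mem_univ k)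

lemma exists_pos_of_sum_pos {ι : Type*} {s : Finset ι} {f : ι → ℝ} (h : 0 < ∑ i ∈ s, f i) :
    ∃ i ∈ s, 0 < f i := by
  by_contra hc
  push_neg at hc
  exact absurd (Finset.sum_nonpos hc) (by linarith)

lemma pos_of_mul_pos_nonneg {a b : ℝ} (h : 0 < a * b) (ha : 0 ≤ a) (hb : 0 ≤ b) :
    0 < a ∧ 0 < b := by
  rcases mul_pos_iff.mp h with ⟨h1, h2⟩ | ⟨h1, h2⟩
  · exact ⟨h1, h2⟩
  · linarith

section

variable {E : Type*} [Fintype E] [DecidableEq E]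
variable (P : Matrix E E ℝ) (A : Set E) [DecidablePred (· ∈ A)]

lemma sum_split (f : E → ℝ) : ∑ j, f j = (∑ j : A, f j) + ∑ j : ↥Aᶜ, f j := by
  rw [← Fintype.sum_subtype_add_sum_subtype (· ∈ A) f]
  rfl

variable {P} in
lemma pow_rowsum (hP1 : ∀ i, ∑ j, P i j = 1) : ∀ n i, ∑ j, (P ^ n) i j = 1 := by
  intro n
  induction n with
  | zero => intro i; simp [Matrix.one_apply]
  | succ k IH =>
      intro i
      rw [pow_succ]
      simp only [Matrix.mul_apply]
      rw [Finset.sum_comm]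
      calc ∑ k', ∑ j, (P ^ k) i k' * P k' j
          = ∑ k', (P ^ k) i k' * ∑ j, P k' j := by simp [Finset.mul_sum]
        _ = 1 := by simp [hP1, IH i]



lemma dom (hP0 : ∀ i j, 0 ≤ P i j) :
    ∀ n (i j : ↥Aᶜ), ((subBlock P Aᶜ Aᶜ) ^ n) i j ≤ (P ^ n) ↑i ↑j := by
  intro n
  induction n with
  | zero =>
      intro i j
      simp only [pow_zero, Matrix.one_apply]
      by_cases h : i = j
      · have h' : (i : E) = (j : E) := congrArg _ h
        simp [h, h']
      · have h' : (i : E) ≠ (j : E) := fun hh => h (Subtype.ext hh)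
        simp [h, h']
  | succ k IH =>
      intro i j
      rw [pow_succ, pow_succ, Matrix.mul_apply, Matrix.mul_apply]
      have step1 : ∑ x : ↥Aᶜ, ((subBlock P Aᶜ Aᶜ) ^ k) i x * (subBlock P Aᶜ Aᶜ) x j
          ≤ ∑ x : ↥Aᶜ, (P ^ k) ↑i ↑x * P ↑x ↑j := by
        apply Finset.sum_le_sum
        intro x _
        have h2 : (subBlock P Aᶜ Aᶜ) x j = P ↑x ↑j := rfl
        rw [h2]
        exact mul_le_mul_of_nonneg_right (IH i x) (hP0 _ _)
      refine step1.trans ?_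
      have hsplit : ∑ x : E, (P ^ k) ↑i x * P x ↑j
          = (∑ x : A, (P ^ k) ↑i ↑x * P ↑x ↑j) + ∑ x : ↥Aᶜ, (P ^ k) ↑i ↑x * P ↑x ↑j :=
        sum_split A _
      have hnn : 0 ≤ ∑ x : A, (P ^ k) ↑i ↑x * P ↑x ↑j :=
        Finset.sum_nonneg fun x _ =>
          mul_nonneg (entry_pow_nonneg P hP0 k _ _) (hP0 _ _)
      linarith [hsplit]


lemma rowsum_mono (hP0 : ∀ i j, 0 ≤ P i j) (hP1 : ∀ i, ∑ j, P i j = 1)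
    {n m : ℕ} (hnm : n ≤ m) (b : ↥Aᶜ) :
    ∑ x, ((subBlock P Aᶜ Aᶜ) ^ m) b x ≤ ∑ x, ((subBlock P Aᶜ Aᶜ) ^ n) b x := by
  induction m, hnm using Nat.le_induction with
  | base => exact le_rfl
  | succ m hm IH =>
      refine le_trans ?_ IH
      rw [pow_succ]
      simp only [Matrix.mul_apply]
      rw [Finset.sum_comm]
      apply Finset.sum_le_sum
      intro d _
      rw [← Finset.mul_sum]
      have hrow : ∑ x : ↥Aᶜ, (subBlock P Aᶜ Aᶜ) d x ≤ 1 := by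
        have := sum_split A (fun x => P ↑d x)
        have hnn : 0 ≤ ∑ x : A, P ↑d ↑x := Finset.sum_nonneg fun x _ => hP0 _ _
        have h1 := hP1 (↑d : E)
        have : (∑ x : ↥Aᶜ, (subBlock P Aᶜ Aᶜ) d x) = ∑ x : ↥Aᶜ, P ↑d ↑x := rfl
        linarith [sum_split A (fun x => P (↑d : E) x)]
      calc ((subBlock P Aᶜ Aᶜ) ^ m) b d * ∑ x, (subBlock P Aᶜ Aᶜ) d x
          ≤ ((subBlock P Aᶜ Aᶜ) ^ m) b d * 1 :=
            mul_le_mul_of_nonneg_left hrow (entry_pow_nonneg _ (fun a b => hP0 _ _) m b d)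
        _ = ((subBlock P Aᶜ Aᶜ) ^ m) b d := mul_one _

lemma exists_Nc (hP0 : ∀ i j, 0 ≤ P i j) (hP1 : ∀ i, ∑ j, P i j = 1)
    (hirr : ∀ i j, ∃ n, 1 ≤ n ∧ 0 < (P ^ n) i j) (hA : A.Nonempty) :
    ∃ N c, 1 ≤ N ∧ 0 ≤ c ∧ c < 1 ∧
      ∀ b : ↥Aᶜ, ∑ x, ((subBlock P Aᶜ Aᶜ) ^ N) b x ≤ c := by
  obtain ⟨a0, ha0⟩ := hA
  choose nf hnf using fun b : ↥Aᶜ => hirr ↑b a0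
  set N := max 1 (Finset.univ.sup nf) with hN
  have hN1 : 1 ≤ N := le_max_left _ _
  have hrow : ∀ b : ↥Aᶜ, ∑ x, ((subBlock P Aᶜ Aᶜ) ^ N) b x < 1 := by
    intro b
    have hle : nf b ≤ N := le_max_of_le_right (Finset.le_sup (Finset.mem_univ b))
    have h1 : ∑ x, ((subBlock P Aᶜ Aᶜ) ^ N) b x ≤ ∑ x, ((subBlock P Aᶜ Aᶜ) ^ (nf b)) b x :=
      rowsum_mono P A hP0 hP1 hle b
    have h2 : ∑ x, ((subBlock P Aᶜ Aᶜ) ^ (nf b)) b x ≤ ∑ x : ↥Aᶜ, (P ^ (nf b)) ↑b ↑x :=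
      Finset.sum_le_sum fun x _ => dom P A hP0 (nf b) b x
    have h3 := sum_split A (fun x => (P ^ (nf b)) (↑b : E) x)
    have h4 : (P ^ (nf b)) ↑b a0 ≤ ∑ x : A, (P ^ (nf b)) ↑b ↑x := by
      have : ((⟨a0, ha0⟩ : A) : E) = a0 := rfl
      calc (P ^ (nf b)) ↑b a0 = (P ^ (nf b)) ↑b ↑(⟨a0, ha0⟩ : A) := by rw [this]
        _ ≤ ∑ x : A, (P ^ (nf b)) ↑b ↑x :=
          Finset.single_le_sum (f := fun x : A => (P ^ (nf b)) (↑b : E) ↑x)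
            (fun x _ => entry_pow_nonneg P hP0 _ _ _) (Finset.mem_univ _)
    have h5 := (hnf b).2
    have h6 := pow_rowsum hP1 (nf b) (↑b : E)
    linarith
  by_cases hB : Nonempty ↥Aᶜ
  · set c := Finset.univ.sup' (Finset.univ_nonempty) (fun b : ↥Aᶜ => ∑ x, ((subBlock P Aᶜ Aᶜ) ^ N) b x) with hc
    obtain ⟨b0, _, hb0⟩ := Finset.exists_mem_eq_sup' (Finset.univ_nonempty)
      (fun b : ↥Aᶜ => ∑ x, ((subBlock P Aᶜ Aᶜ) ^ N) b x)
    refine ⟨N, c, hN1, ?_, ?_, ?_⟩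
    · rw [hc, hb0]
      exact Finset.sum_nonneg fun x _ => entry_pow_nonneg _ (fun u v => hP0 _ _) _ _ _
    · rw [hc, hb0]; exact hrow b0
    · intro b; rw [hc]
      exact Finset.le_sup' (fun b : ↥Aᶜ => ∑ x, ((subBlock P Aᶜ Aᶜ) ^ N) b x) (Finset.mem_univ b)
  · exact ⟨N, 0, hN1, le_rfl, by norm_num, fun b => absurd ⟨b⟩ hB⟩

lemma isUnit_one_sub (hP0 : ∀ i j, 0 ≤ P i j) (hP1 : ∀ i, ∑ j, P i j = 1)
    (hirr : ∀ i j, ∃ n, 1 ≤ n ∧ 0 < (P ^ n) i j) (hA : A.Nonempty) :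
    IsUnit ((1 : Matrix ↥Aᶜ ↥Aᶜ ℝ) - subBlock P Aᶜ Aᶜ) := by
  obtain ⟨N, c, hN1, hc0, hc1, hrow⟩ := exists_Nc P A hP0 hP1 hirr hA
  rw [Matrix.isUnit_iff_isUnit_det, isUnit_iff_ne_zero]
  intro hdet
  obtain ⟨v, hv, hveq⟩ := (Matrix.exists_mulVec_eq_zero_iff).2 hdet
  set Q := subBlock P Aᶜ Aᶜ with hQ
  have hQv : Q *ᵥ v = v := by
    have : (1 - Q) *ᵥ v = 1 *ᵥ v - Q *ᵥ v := Matrix.sub_mulVec _ _ _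
    rw [hveq, Matrix.one_mulVec] at this
    exact (sub_eq_zero.mp this.symm).symm
  have hQnv : ∀ n, (Q ^ n) *ᵥ v = v := by
    intro n
    induction n with
    | zero => simp
    | succ k IH => rw [pow_succ, ← Matrix.mulVec_mulVec, hQv, IH]
  have hBne : Nonempty ↥Aᶜ := by
    by_contra h
    exact hv (funext fun b => absurd ⟨b⟩ h)
  obtain ⟨b1, hb1⟩ : ∃ b, v b ≠ 0 := by
    by_contra h; push_neg at h; exact hv (funext h)
  obtain ⟨b0, _, hb0⟩ := Finset.exists_mem_eq_sup' (Finset.univ_nonempty)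
    (fun b : ↥Aᶜ => |v b|)
  set M := Finset.univ.sup' (Finset.univ_nonempty) (fun b : ↥Aᶜ => |v b|) with hM
  have hle : ∀ b, |v b| ≤ M := by
    intro b; rw [hM]
    exact Finset.le_sup' (fun b : ↥Aᶜ => |v b|) (Finset.mem_univ b)
  have hMpos : 0 < M := lt_of_lt_of_le (abs_pos.2 hb1) (hle b1)
  have : M = |((Q ^ N) *ᵥ v) b0| := by rw [hQnv N, hb0]
  have hbound : |((Q ^ N) *ᵥ v) b0| ≤ c * M := by
    rw [Matrix.mulVec, dotProduct]
    calc |∑ x, (Q ^ N) b0 x * v x| ≤ ∑ x, |(Q ^ N) b0 x * v x| := Finset.abs_sum_le_sum_abs _ _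
      _ ≤ ∑ x, (Q ^ N) b0 x * M := by
          apply Finset.sum_le_sum
          intro x _
          rw [abs_mul, abs_of_nonneg (entry_pow_nonneg Q (fun u w => hP0 _ _) N b0 x)]
          exact mul_le_mul_of_nonneg_left (hle x) (entry_pow_nonneg Q (fun u w => hP0 _ _) N b0 x)
      _ = (∑ x, (Q ^ N) b0 x) * M := by rw [Finset.sum_mul]
      _ ≤ c * M := mul_le_mul_of_nonneg_right (hrow b0) (le_of_lt hMpos)
  nlinarith [this, hbound, hMpos]

lemma geom_decomp (hU : IsUnit ((1 : Matrix ↥Aᶜ ↥Aᶜ ℝ) - subBlock P Aᶜ Aᶜ)) (M : ℕ) :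
    (1 - subBlock P Aᶜ Aᶜ)⁻¹ =
      (∑ t ∈ Finset.range M, (subBlock P Aᶜ Aᶜ) ^ t)
        + (1 - subBlock P Aᶜ Aᶜ)⁻¹ * (subBlock P Aᶜ Aᶜ) ^ M := by
  set Q := subBlock P Aᶜ Aᶜ with hQdef
  set S := ∑ t ∈ Finset.range M, Q ^ t with hS
  have hdet := (Matrix.isUnit_iff_isUnit_det _).1 hU
  have h2 : (1 - Q)⁻¹ * (1 - Q) = 1 := Matrix.nonsing_inv_mul _ hdet
  have h3 : (1 - Q) * S = 1 - Q ^ M := by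
    rw [hS, ← neg_sub Q 1, neg_mul, mul_geom_sum, neg_sub]
  have h4 : (1 - Q) * S + Q ^ M = 1 := by rw [h3]; abel
  calc (1 - Q)⁻¹ = (1 - Q)⁻¹ * 1 := (mul_one _).symm
    _ = (1 - Q)⁻¹ * ((1 - Q) * S + Q ^ M) := by rw [h4]
    _ = ((1 - Q)⁻¹ * (1 - Q)) * S + (1 - Q)⁻¹ * Q ^ M := by rw [mul_add, mul_assoc]
    _ = S + (1 - Q)⁻¹ * Q ^ M := by rw [h2, one_mul]

lemma rowsum_decay (hP0 : ∀ i j, 0 ≤ P i j) {N : ℕ} {c : ℝ} (hc0 : 0 ≤ c)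
    (hrow : ∀ b : ↥Aᶜ, ∑ x, ((subBlock P Aᶜ Aᶜ) ^ N) b x ≤ c) :
    ∀ k (b : ↥Aᶜ), ∑ x, ((subBlock P Aᶜ Aᶜ) ^ (N * k)) b x ≤ c ^ k := by
  intro k
  induction k with
  | zero => intro b; simp [Matrix.one_apply]
  | succ m IH =>
      intro b
      have hpow : (subBlock P Aᶜ Aᶜ) ^ (N * (m + 1))
          = (subBlock P Aᶜ Aᶜ) ^ (N * m) * (subBlock P Aᶜ Aᶜ) ^ N := by
        rw [← pow_add]; ring_nf
      rw [hpow]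
      simp only [Matrix.mul_apply]
      rw [Finset.sum_comm]
      calc ∑ d, ∑ x, ((subBlock P Aᶜ Aᶜ) ^ (N * m)) b d * ((subBlock P Aᶜ Aᶜ) ^ N) d x
          = ∑ d, ((subBlock P Aᶜ Aᶜ) ^ (N * m)) b d * ∑ x, ((subBlock P Aᶜ Aᶜ) ^ N) d x := by
            simp [Finset.mul_sum]
        _ ≤ ∑ d, ((subBlock P Aᶜ Aᶜ) ^ (N * m)) b d * c := by
            apply Finset.sum_le_sum
            intro d _
            exact mul_le_mul_of_nonneg_left (hrow d)
              (entry_pow_nonneg _ (fun u v => hP0 _ _) _ _ _)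
        _ = (∑ d, ((subBlock P Aᶜ Aᶜ) ^ (N * m)) b d) * c := by rw [Finset.sum_mul]
        _ ≤ c ^ m * c := mul_le_mul_of_nonneg_right (IH b) hc0
        _ = c ^ (m + 1) := (pow_succ c m).symm

lemma inv_nonneg (hP0 : ∀ i j, 0 ≤ P i j) (hP1 : ∀ i, ∑ j, P i j = 1)
    (hirr : ∀ i j, ∃ n, 1 ≤ n ∧ 0 < (P ^ n) i j) (hA : A.Nonempty) :
    ∀ i j, 0 ≤ ((1 - subBlock P Aᶜ Aᶜ)⁻¹) i j := by
  obtain ⟨N, c, hN1, hc0, hc1, hrow⟩ := exists_Nc P A hP0 hP1 hirr hA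
  have hU := isUnit_one_sub P A hP0 hP1 hirr hA
  set Q := subBlock P Aᶜ Aᶜ with hQdef
  set R := (1 - Q)⁻¹ with hRdef
  intro i j
  by_contra hcon
  push_neg at hcon
  set C := ∑ b, |R i b| with hC
  have hC0 : 0 ≤ C := Finset.sum_nonneg fun b _ => abs_nonneg _
  obtain ⟨k, hk⟩ := exists_pow_lt_of_lt_one (x := -R i j / (C + 1)) (div_pos (by linarith) (by linarith)) hc1
  have hdec := geom_decomp P A hU (N * k)
  have hQnn : ∀ m (u v : ↥Aᶜ), 0 ≤ (Q ^ m) u v :=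
    fun m u v => entry_pow_nonneg _ (fun a b => hP0 _ _) m u v
  have hS : 0 ≤ (∑ t ∈ Finset.range (N * k), Q ^ t) i j := by
    rw [Matrix.sum_apply]
    exact Finset.sum_nonneg fun t _ => hQnn t i j
  have hentry : ∀ b, (Q ^ (N * k)) b j ≤ c ^ k := by
    intro b
    refine le_trans ?_ (rowsum_decay P A hP0 hc0 hrow k b)
    exact Finset.single_le_sum (fun x _ => hQnn _ b x) (Finset.mem_univ j)
  have herr : -(C * c ^ k) ≤ (R * Q ^ (N * k)) i j := by
    rw [Matrix.mul_apply]
    have : |∑ b, R i b * (Q ^ (N * k)) b j| ≤ C * c ^ k := by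
      calc |∑ b, R i b * (Q ^ (N * k)) b j| ≤ ∑ b, |R i b * (Q ^ (N * k)) b j| :=
            Finset.abs_sum_le_sum_abs _ _
        _ ≤ ∑ b, |R i b| * c ^ k := by
            apply Finset.sum_le_sum
            intro b _
            rw [abs_mul, abs_of_nonneg (hQnn _ b j)]
            exact mul_le_mul_of_nonneg_left (hentry b) (abs_nonneg _)
        _ = C * c ^ k := by rw [← Finset.sum_mul]
    linarith [neg_abs_le (∑ b, R i b * (Q ^ (N * k)) b j)]
  have hRij : R i j = (∑ t ∈ Finset.range (N * k), Q ^ t) i j + (R * Q ^ (N * k)) i j := by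
    exact congrFun (congrFun hdec i) j
  have hck : 0 ≤ c ^ k := pow_nonneg hc0 k
  rw [lt_div_iff₀ (by linarith : (0:ℝ) < C + 1)] at hk
  nlinarith [hk, hck, hS, herr, hRij, hC0]

lemma inv_ge_pow (hP0 : ∀ i j, 0 ≤ P i j) (hP1 : ∀ i, ∑ j, P i j = 1)
    (hirr : ∀ i j, ∃ n, 1 ≤ n ∧ 0 < (P ^ n) i j) (hA : A.Nonempty) :
    ∀ k (i j : ↥Aᶜ), ((subBlock P Aᶜ Aᶜ) ^ k) i j ≤ ((1 - subBlock P Aᶜ Aᶜ)⁻¹) i j := by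
  intro k i j
  have hU := isUnit_one_sub P A hP0 hP1 hirr hA
  have hdec := geom_decomp P A hU (k + 1)
  have hRnn := inv_nonneg P A hP0 hP1 hirr hA
  have hQnn : ∀ m (u v : ↥Aᶜ), 0 ≤ ((subBlock P Aᶜ Aᶜ) ^ m) u v :=
    fun m u v => entry_pow_nonneg _ (fun a b => hP0 _ _) m u v
  have hRij := congrFun (congrFun hdec i) j
  have hS : ((subBlock P Aᶜ Aᶜ) ^ k) i j
      ≤ (∑ t ∈ Finset.range (k + 1), (subBlock P Aᶜ Aᶜ) ^ t) i j := by
    rw [Matrix.sum_apply]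
    exact Finset.single_le_sum (fun t _ => hQnn t i j) (Finset.mem_range.2 (Nat.lt_succ_self k))
  have herr : 0 ≤ ((1 - subBlock P Aᶜ Aᶜ)⁻¹ * (subBlock P Aᶜ Aᶜ) ^ (k + 1)) i j :=
    entry_mul_nonneg _ _ hRnn (hQnn (k + 1)) i j
  have : ((1 - subBlock P Aᶜ Aᶜ)⁻¹) i j
      = (∑ t ∈ Finset.range (k + 1), (subBlock P Aᶜ Aᶜ) ^ t) i j
        + ((1 - subBlock P Aᶜ Aᶜ)⁻¹ * (subBlock P Aᶜ Aᶜ) ^ (k + 1)) i j := hRij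
  linarith

lemma inv_mul_BA_rowsum (hP0 : ∀ i j, 0 ≤ P i j) (hP1 : ∀ i, ∑ j, P i j = 1)
    (hirr : ∀ i j, ∃ n, 1 ≤ n ∧ 0 < (P ^ n) i j) (hA : A.Nonempty) :
    ∀ b : ↥Aᶜ, ∑ a : ↥A, ((1 - subBlock P Aᶜ Aᶜ)⁻¹ * subBlock P Aᶜ A) b a = 1 := by
  have hU := isUnit_one_sub P A hP0 hP1 hirr hA
  have hdet := (Matrix.isUnit_iff_isUnit_det _).1 hU
  have hinv : (1 - subBlock P Aᶜ Aᶜ)⁻¹ * (1 - subBlock P Aᶜ Aᶜ) = 1 :=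
    Matrix.nonsing_inv_mul _ hdet
  have h1 : (1 - subBlock P Aᶜ Aᶜ) *ᵥ (fun _ => (1:ℝ))
      = subBlock P Aᶜ A *ᵥ (fun _ => (1:ℝ)) := by
    funext b
    have hx : ∀ x : ↥Aᶜ, (1 - subBlock P Aᶜ Aᶜ) b x
        = (if b = x then (1:ℝ) else 0) - P ↑b ↑x := by
      intro x
      rw [Matrix.sub_apply, Matrix.one_apply]
      rfl
    have e2 := sum_split A (fun x => P (↑b : E) x)
    have e3 := hP1 (↑b : E)
    simp only [Matrix.mulVec, dotProduct, mul_one, hx, Finset.sum_sub_distrib,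
      Finset.sum_ite_eq, Finset.mem_univ, if_true]
    have e5 : ∑ x : ↥A, subBlock P Aᶜ A b x = ∑ x : A, P ↑b ↑x := rfl
    linarith
  have h2 : ((1 - subBlock P Aᶜ Aᶜ)⁻¹ * subBlock P Aᶜ A) *ᵥ (fun _ => (1:ℝ))
      = fun _ => (1:ℝ) := by
    rw [← Matrix.mulVec_mulVec, ← h1, Matrix.mulVec_mulVec, hinv, Matrix.one_mulVec]
  intro b
  have h3 := congrFun h2 b
  simpa [Matrix.mulVec, dotProduct, mul_one] using h3

lemma hat_nonneg (hP0 : ∀ i j, 0 ≤ P i j) (hP1 : ∀ i, ∑ j, P i j = 1)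
    (hirr : ∀ i j, ∃ n, 1 ≤ n ∧ 0 < (P ^ n) i j) (hA : A.Nonempty) :
    ∀ i j : ↥A, 0 ≤ (subBlock P A A +
      subBlock P A Aᶜ * (1 - subBlock P Aᶜ Aᶜ)⁻¹ * subBlock P Aᶜ A) i j := by
  intro i j
  have h1 : (0:ℝ) ≤ subBlock P A A i j := hP0 _ _
  have h2 : 0 ≤ (subBlock P A Aᶜ * (1 - subBlock P Aᶜ Aᶜ)⁻¹ * subBlock P Aᶜ A) i j :=
    entry_mul_nonneg _ _
      (entry_mul_nonneg _ _ (fun u v => hP0 _ _) (inv_nonneg P A hP0 hP1 hirr hA))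
      (fun u v => hP0 _ _) i j
  have : (subBlock P A A + subBlock P A Aᶜ * (1 - subBlock P Aᶜ Aᶜ)⁻¹ * subBlock P Aᶜ A) i j
      = subBlock P A A i j
        + (subBlock P A Aᶜ * (1 - subBlock P Aᶜ Aᶜ)⁻¹ * subBlock P Aᶜ A) i j := rfl
  linarith

lemma hat_rowsum (hP0 : ∀ i j, 0 ≤ P i j) (hP1 : ∀ i, ∑ j, P i j = 1)
    (hirr : ∀ i j, ∃ n, 1 ≤ n ∧ 0 < (P ^ n) i j) (hA : A.Nonempty) :
    ∀ i : ↥A, ∑ j : ↥A, (subBlock P A A +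
      subBlock P A Aᶜ * (1 - subBlock P Aᶜ Aᶜ)⁻¹ * subBlock P Aᶜ A) i j = 1 := by
  intro i
  have hsplit : ∑ j, (subBlock P A A +
      subBlock P A Aᶜ * (1 - subBlock P Aᶜ Aᶜ)⁻¹ * subBlock P Aᶜ A) i j
      = (∑ j, subBlock P A A i j)
        + ∑ j, (subBlock P A Aᶜ * ((1 - subBlock P Aᶜ Aᶜ)⁻¹ * subBlock P Aᶜ A)) i j := by
    simp only [Matrix.add_apply, Finset.sum_add_distrib, Matrix.mul_assoc]
  have hsecond : ∑ j, (subBlock P A Aᶜ * ((1 - subBlock P Aᶜ Aᶜ)⁻¹ * subBlock P Aᶜ A)) i j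
      = ∑ b : ↥Aᶜ, subBlock P A Aᶜ i b := by
    calc ∑ j, (subBlock P A Aᶜ * ((1 - subBlock P Aᶜ Aᶜ)⁻¹ * subBlock P Aᶜ A)) i j
        = ∑ j, ∑ b, subBlock P A Aᶜ i b
            * ((1 - subBlock P Aᶜ Aᶜ)⁻¹ * subBlock P Aᶜ A) b j := by
          exact Finset.sum_congr rfl fun j _ => Matrix.mul_apply
      _ = ∑ b, ∑ j, subBlock P A Aᶜ i b
            * ((1 - subBlock P Aᶜ Aᶜ)⁻¹ * subBlock P Aᶜ A) b j := Finset.sum_comm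
      _ = ∑ b, subBlock P A Aᶜ i b
            * ∑ j, ((1 - subBlock P Aᶜ Aᶜ)⁻¹ * subBlock P Aᶜ A) b j := by
          exact Finset.sum_congr rfl fun b _ => (Finset.mul_sum _ _ _).symm
      _ = ∑ b : ↥Aᶜ, subBlock P A Aᶜ i b := by
          refine Finset.sum_congr rfl fun b _ => ?_
          rw [inv_mul_BA_rowsum P A hP0 hP1 hirr hA b, mul_one]
  have e0 : ∑ j : ↥A, subBlock P A A i j = ∑ j : A, P ↑i ↑j := rfl
  have e1 : ∑ b : ↥Aᶜ, subBlock P A Aᶜ i b = ∑ b : ↥Aᶜ, P ↑i ↑b := rfl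
  have e2 := sum_split A (fun x => P (↑i : E) x)
  have e3 := hP1 (↑i : E)
  rw [hsplit, hsecond]
  linarith

lemma QA_le_hat (hP0 : ∀ i j, 0 ≤ P i j) (hP1 : ∀ i, ∑ j, P i j = 1)
    (hirr : ∀ i j, ∃ n, 1 ≤ n ∧ 0 < (P ^ n) i j) (hA : A.Nonempty) (i j : ↥A) :
    subBlock P A A i j ≤ (subBlock P A A + subBlock P A Aᶜ * (1 - subBlock P Aᶜ Aᶜ)⁻¹ * subBlock P Aᶜ A) i j := by
  have h2 : 0 ≤ (subBlock P A Aᶜ * (1 - subBlock P Aᶜ Aᶜ)⁻¹ * subBlock P Aᶜ A) i j :=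
    entry_mul_nonneg _ _
      (entry_mul_nonneg _ _ (fun u v => hP0 _ _) (inv_nonneg P A hP0 hP1 hirr hA))
      (fun u v => hP0 _ _) i j
  have e : (subBlock P A A + subBlock P A Aᶜ * (1 - subBlock P Aᶜ Aᶜ)⁻¹ * subBlock P Aᶜ A) i j = subBlock P A A i j
      + (subBlock P A Aᶜ * (1 - subBlock P Aᶜ Aᶜ)⁻¹ * subBlock P Aᶜ A) i j := rfl
  linarith

lemma mid_le_hat (hP0 : ∀ i j, 0 ≤ P i j) (hP1 : ∀ i, ∑ j, P i j = 1)
    (hirr : ∀ i j, ∃ n, 1 ≤ n ∧ 0 < (P ^ n) i j) (hA : A.Nonempty) (k : ℕ) (i j : ↥A) :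
    (subBlock P A Aᶜ * ((subBlock P Aᶜ Aᶜ) ^ k * subBlock P Aᶜ A)) i j ≤ (subBlock P A A + subBlock P A Aᶜ * (1 - subBlock P Aᶜ Aᶜ)⁻¹ * subBlock P Aᶜ A) i j := by
  have key : (subBlock P A Aᶜ * ((subBlock P Aᶜ Aᶜ) ^ k * subBlock P Aᶜ A)) i j
      ≤ (subBlock P A Aᶜ * ((1 - subBlock P Aᶜ Aᶜ)⁻¹ * subBlock P Aᶜ A)) i j := by
    rw [Matrix.mul_apply, Matrix.mul_apply]
    apply Finset.sum_le_sum
    intro b _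
    apply mul_le_mul_of_nonneg_left _ (hP0 _ _)
    rw [Matrix.mul_apply, Matrix.mul_apply]
    apply Finset.sum_le_sum
    intro c _
    exact mul_le_mul_of_nonneg_right (inv_ge_pow P A hP0 hP1 hirr hA k b c) (hP0 _ _)
  have e : (subBlock P A A + subBlock P A Aᶜ * (1 - subBlock P Aᶜ Aᶜ)⁻¹ * subBlock P Aᶜ A) i j = subBlock P A A i j
      + (subBlock P A Aᶜ * ((1 - subBlock P Aᶜ Aᶜ)⁻¹ * subBlock P Aᶜ A)) i j := by
    rw [← Matrix.mul_assoc]; rfl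
  have h1 : (0:ℝ) ≤ subBlock P A A i j := hP0 _ _
  linarith

lemma decB (hP0 : ∀ i j, 0 ≤ P i j) :
    ∀ n, 1 ≤ n → ∀ (b : ↥Aᶜ) (j : ↥A), 0 < (P ^ n) ↑b ↑j →
    ∃ (t : ℕ) (a : ↥A), 1 ≤ t ∧ t ≤ n ∧
      0 < ((subBlock P Aᶜ Aᶜ) ^ (t - 1) * subBlock P Aᶜ A) b a ∧
      ((t = n ∧ a = j) ∨ (1 ≤ n - t ∧ 0 < (P ^ (n - t)) ↑a ↑j)) := by
  intro n
  induction n with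
  | zero => intro h; exact absurd h (by norm_num)
  | succ m IH =>
      intro _ b j hpos
      by_cases hm : m = 0
      · subst hm
        rw [pow_one] at hpos
        refine ⟨1, j, le_rfl, le_rfl, ?_, Or.inl ⟨rfl, rfl⟩⟩
        rw [show (1:ℕ) - 1 = 0 from rfl, pow_zero, Matrix.one_mul]
        exact hpos
      · have hm1 : 1 ≤ m := Nat.one_le_iff_ne_zero.2 hm
        have hstep : (P ^ (m + 1)) ↑b ↑j = ∑ x, P ↑b x * (P ^ m) x ↑j := by
          rw [pow_succ', Matrix.mul_apply]
        rw [hstep] at hpos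
        obtain ⟨x, _, hx⟩ := exists_pos_of_sum_pos hpos
        obtain ⟨hx1, hx2⟩ := pos_of_mul_pos_nonneg hx (hP0 _ _) (entry_pow_nonneg P hP0 m _ _)
        by_cases hxa : x ∈ A
        · refine ⟨1, ⟨x, hxa⟩, le_rfl, by omega, ?_, Or.inr ⟨by omega, ?_⟩⟩
          · rw [show (1:ℕ) - 1 = 0 from rfl, pow_zero, Matrix.one_mul]
            exact hx1
          · rw [show m + 1 - 1 = m from rfl]
            exact hx2
        · obtain ⟨t', a, ht1, ht2, hQpos, hbr⟩ := IH hm1 ⟨x, hxa⟩ j hx2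
          refine ⟨t' + 1, a, by omega, by omega, ?_, ?_⟩
          · have hsplit2 : (subBlock P Aᶜ Aᶜ) ^ t' * subBlock P Aᶜ A
                = subBlock P Aᶜ Aᶜ * ((subBlock P Aᶜ Aᶜ) ^ (t' - 1) * subBlock P Aᶜ A) := by
              conv_lhs => rw [show t' = (t' - 1) + 1 by omega]
              rw [pow_succ', Matrix.mul_assoc]
            rw [show t' + 1 - 1 = t' from rfl, hsplit2]
            have hl := single_le_mul_entry (subBlock P Aᶜ Aᶜ)
              ((subBlock P Aᶜ Aᶜ) ^ (t' - 1) * subBlock P Aᶜ A)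
              (fun u v => hP0 _ _)
              (entry_mul_nonneg _ _ (fun u v => entry_pow_nonneg _ (fun p q => hP0 _ _) _ _ _)
                (fun u v => hP0 _ _)) b ⟨x, hxa⟩ a
            have hmul : 0 < subBlock P Aᶜ Aᶜ b ⟨x, hxa⟩
                * ((subBlock P Aᶜ Aᶜ) ^ (t' - 1) * subBlock P Aᶜ A) ⟨x, hxa⟩ a :=
              mul_pos hx1 hQpos
            linarith
          · rcases hbr with ⟨hteq, haeq⟩ | ⟨hge, hppos⟩
            · exact Or.inl ⟨by omega, haeq⟩
            · refine Or.inr ⟨by omega, ?_⟩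
              rw [show m + 1 - (t' + 1) = m - t' by omega]
              exact hppos

lemma main_irr (hP0 : ∀ i j, 0 ≤ P i j) (hP1 : ∀ i, ∑ j, P i j = 1)
    (hirr : ∀ i j, ∃ n, 1 ≤ n ∧ 0 < (P ^ n) i j) (hA : A.Nonempty) :
    ∀ n, 1 ≤ n → ∀ i j : ↥A, 0 < (P ^ n) ↑i ↑j →
      ∃ m, 1 ≤ m ∧ 0 < ((subBlock P A A + subBlock P A Aᶜ * (1 - subBlock P Aᶜ Aᶜ)⁻¹ * subBlock P Aᶜ A) ^ m) i j := by
  have hhat0 := hat_nonneg P A hP0 hP1 hirr hA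
  intro n
  induction n using Nat.strong_induction_on with
  | _ n IH =>
      intro hn i j hpos
      by_cases hn1 : n = 1
      · subst hn1
        rw [pow_one] at hpos
        refine ⟨1, le_rfl, ?_⟩
        rw [pow_one]
        exact lt_of_lt_of_le hpos (QA_le_hat P A hP0 hP1 hirr hA i j)
      · have hn2 : 2 ≤ n := by omega
        have hstep : (P ^ n) ↑i ↑j = ∑ x, P ↑i x * (P ^ (n - 1)) x ↑j := by
          conv_lhs => rw [show n = (n - 1) + 1 by omega]
          rw [pow_succ', Matrix.mul_apply]
        rw [hstep] at hpos
        obtain ⟨x, _, hx⟩ := exists_pos_of_sum_pos hpos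
        obtain ⟨hx1, hx2⟩ := pos_of_mul_pos_nonneg hx (hP0 _ _)
          (entry_pow_nonneg P hP0 (n - 1) _ _)
        by_cases hxa : x ∈ A
        · obtain ⟨m', hm1, hm2⟩ := IH (n - 1) (by omega) (by omega) ⟨x, hxa⟩ j hx2
          refine ⟨m' + 1, by omega, ?_⟩
          rw [pow_succ']
          have hl := single_le_mul_entry (subBlock P A A + subBlock P A Aᶜ * (1 - subBlock P Aᶜ Aᶜ)⁻¹ * subBlock P Aᶜ A) ((subBlock P A A + subBlock P A Aᶜ * (1 - subBlock P Aᶜ Aᶜ)⁻¹ * subBlock P Aᶜ A) ^ m') hhat0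
            (entry_pow_nonneg _ hhat0 m') i ⟨x, hxa⟩ j
          have hPix : 0 < (subBlock P A A + subBlock P A Aᶜ * (1 - subBlock P Aᶜ Aᶜ)⁻¹ * subBlock P Aᶜ A) i ⟨x, hxa⟩ :=
            lt_of_lt_of_le hx1 (QA_le_hat P A hP0 hP1 hirr hA i ⟨x, hxa⟩)
          nlinarith [mul_pos hPix hm2]
        · obtain ⟨t, a, ht1, ht2, hQpos, hbr⟩ := decB P A hP0 (n - 1) (by omega) ⟨x, hxa⟩ j hx2
          have hPia : 0 < (subBlock P A A + subBlock P A Aᶜ * (1 - subBlock P Aᶜ Aᶜ)⁻¹ * subBlock P Aᶜ A) i a := by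
            have h1 := single_le_mul_entry (subBlock P A Aᶜ)
              ((subBlock P Aᶜ Aᶜ) ^ (t - 1) * subBlock P Aᶜ A)
              (fun u v => hP0 _ _)
              (entry_mul_nonneg _ _ (fun u v => entry_pow_nonneg _ (fun p q => hP0 _ _) _ _ _)
                (fun u v => hP0 _ _)) i ⟨x, hxa⟩ a
            have h2 := mid_le_hat P A hP0 hP1 hirr hA (t - 1) i a
            have h3 : 0 < subBlock P A Aᶜ i ⟨x, hxa⟩
                * ((subBlock P Aᶜ Aᶜ) ^ (t - 1) * subBlock P Aᶜ A) ⟨x, hxa⟩ a :=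
              mul_pos hx1 hQpos
            linarith
          rcases hbr with ⟨hteq, haeq⟩ | ⟨hge, hppos⟩
          · subst haeq
            exact ⟨1, le_rfl, by rw [pow_one]; exact hPia⟩
          · obtain ⟨m', hm1, hm2⟩ := IH (n - 1 - t) (by omega) (by omega) a j hppos
            refine ⟨m' + 1, by omega, ?_⟩
            rw [pow_succ']
            have hl := single_le_mul_entry (subBlock P A A + subBlock P A Aᶜ * (1 - subBlock P Aᶜ Aᶜ)⁻¹ * subBlock P Aᶜ A) ((subBlock P A A + subBlock P A Aᶜ * (1 - subBlock P Aᶜ Aᶜ)⁻¹ * subBlock P Aᶜ A) ^ m') hhat0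
              (entry_pow_nonneg _ hhat0 m') i a j
            nlinarith [mul_pos hPia hm2]

end

end Stmt19Aux

theorem stmt19 {E : Type*} [Fintype E] [Nonempty E] [DecidableEq E]
    (P : Matrix E E ℝ)
    (hP0 : ∀ i j, 0 ≤ P i j) (hP1 : ∀ i, ∑ j, P i j = 1)
    (hirr : ∀ i j, ∃ n, 1 ≤ n ∧ 0 < (P ^ n) i j)
    (A : Set E) [DecidablePred (· ∈ A)] (hA : A.Nonempty) :
    IsUnit (1 - subBlock P Aᶜ Aᶜ) ∧
    (∀ i j : ↥A, 0 ≤ (subBlock P A A +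
      subBlock P A Aᶜ * (1 - subBlock P Aᶜ Aᶜ)⁻¹ * subBlock P Aᶜ A) i j) ∧
    (∀ i : ↥A, ∑ j : ↥A, (subBlock P A A +
      subBlock P A Aᶜ * (1 - subBlock P Aᶜ Aᶜ)⁻¹ * subBlock P Aᶜ A) i j = 1) ∧
    ∀ i j : ↥A, ∃ n, 1 ≤ n ∧ 0 < ((subBlock P A A +
      subBlock P A Aᶜ * (1 - subBlock P Aᶜ Aᶜ)⁻¹ * subBlock P Aᶜ A) ^ n) i j := by
  refine ⟨Stmt19Aux.isUnit_one_sub P A hP0 hP1 hirr hA,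
    Stmt19Aux.hat_nonneg P A hP0 hP1 hirr hA,
    Stmt19Aux.hat_rowsum P A hP0 hP1 hirr hA, ?_⟩
  intro i j
  obtain ⟨n, hn, hpos⟩ := hirr ↑i ↑j
  exact Stmt19Aux.main_irr P A hP0 hP1 hirr hA n hn i j hpos
end
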